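/- arXiv:1307.0861 — 7 statements merged into one kernel-verified Lean document; each statement's English description precedes it below -/
import Mathlib

section
/- Let Σ_x be a real n×n positive semidefinite matrix and Φ a real ℓ×n matrix. For every σ² > 0, the matrices σ²·I_ℓ + Φ·Σ_x·Φᵀ and I_n + σ⁻²·Σ are invertible (the former being positive definite), and tr(Σ_x − Σ_x·Φᵀ·(σ²·I_ℓ + Φ·Σ_x·Φᵀ)⁻¹·Φ·Σ_x) = tr(Σ_x·(I_n + σ⁻²·Σ)⁻¹), where Σ := Σ_x^{1/2}·Φᵀ·Φ·Σ_x^{1/2} and Σ_x^{1/2} is the positive semidefinite square root of Σ_x. -/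
open Matrix

namespace Matrix.PosSemidef

open scoped ComplexOrder

/-- The square root of a positive semidefinite matrix, as defined in Mathlib (Dec 2024). -/
noncomputable def sqrt {n 𝕜 : Type*} [Fintype n] [RCLike 𝕜] [DecidableEq n]
    {A : Matrix n n 𝕜} (hA : PosSemidef A) : Matrix n n 𝕜 :=
  hA.1.eigenvectorUnitary.1 * diagonal ((↑) ∘ (√·) ∘ hA.1.eigenvalues) *
  (star hA.1.eigenvectorUnitary : Matrix n n 𝕜)

lemma posSemidef_sqrt {n : ℕ} {A : Matrix (Fin n) (Fin n) ℝ} (hA : PosSemidef A) :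
    PosSemidef hA.sqrt := by
  unfold sqrt
  have hU : (star hA.1.eigenvectorUnitary : Matrix (Fin n) (Fin n) ℝ)
      = (hA.1.eigenvectorUnitary.1)ᴴ := rfl
  rw [hU]
  apply PosSemidef.mul_mul_conjTranspose_same
  refine posSemidef_diagonal_iff.mpr fun i ↦ ?_
  simp only [Function.comp_apply, RCLike.ofReal_real_eq_id, id]
  exact Real.sqrt_nonneg _

lemma sqrt_mul_self {n : ℕ} {A : Matrix (Fin n) (Fin n) ℝ} (hA : PosSemidef A) :
    hA.sqrt * hA.sqrt = A := by
  have hsp := hA.1.spectral_theorem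
  rw [Unitary.conjStarAlgAut_apply] at hsp
  have h1 : (star hA.1.eigenvectorUnitary : Matrix (Fin n) (Fin n) ℝ)
      * hA.1.eigenvectorUnitary.1 = 1 := Unitary.coe_star_mul_self _
  unfold sqrt
  conv_rhs => rw [hsp]
  simp only [Matrix.mul_assoc]
  rw [← Matrix.mul_assoc _ _ (diagonal _ * _), h1, Matrix.one_mul, ← Matrix.mul_assoc (diagonal _),
    diagonal_mul_diagonal]
  congr 3
  funext i
  simp only [Function.comp_apply, RCLike.ofReal_real_eq_id, id]
  exact Real.mul_self_sqrt (hA.eigenvalues_nonneg i)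

end Matrix.PosSemidef

lemma smul_one_posDef {m : ℕ} {c : ℝ} (hc : 0 < c) :
    (c • (1 : Matrix (Fin m) (Fin m) ℝ)).PosDef := by
  rw [smul_one_eq_diagonal]
  exact posDef_diagonal_iff.mpr fun _ => hc

/-- For σ² > 0, the matrix σ²·I_ℓ + Φ·Σ_x·Φᵀ is positive definite (hence
invertible), I_n + σ⁻²·Σ is invertible, and
tr(Σ_x − Σ_x·Φᵀ·(σ²·I_ℓ + Φ·Σ_x·Φᵀ)⁻¹·Φ·Σ_x) = tr(Σ_x·(I_n + σ⁻²·Σ)⁻¹), where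
Σ = Σ_x^{1/2}·Φᵀ·Φ·Σ_x^{1/2}. -/
theorem stmt_0 {n l : ℕ} (Sx : Matrix (Fin n) (Fin n) ℝ) (hSx : Sx.PosSemidef)
    (Φ : Matrix (Fin l) (Fin n) ℝ) (σ2 : ℝ) (hσ2 : 0 < σ2) :
    (σ2 • (1 : Matrix (Fin l) (Fin l) ℝ) + Φ * Sx * Φᵀ).PosDef ∧
    IsUnit (σ2 • (1 : Matrix (Fin l) (Fin l) ℝ) + Φ * Sx * Φᵀ).det ∧
    IsUnit ((1 : Matrix (Fin n) (Fin n) ℝ) + σ2⁻¹ • (hSx.sqrt * Φᵀ * Φ * hSx.sqrt)).det ∧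
    (Sx - Sx * Φᵀ * (σ2 • (1 : Matrix (Fin l) (Fin l) ℝ) + Φ * Sx * Φᵀ)⁻¹ * Φ * Sx).trace
      = (Sx * ((1 : Matrix (Fin n) (Fin n) ℝ)
          + σ2⁻¹ • (hSx.sqrt * Φᵀ * Φ * hSx.sqrt))⁻¹).trace := by
  set S := hSx.sqrt with hSdef
  have hSsymm : Sᵀ = S := by
    have := hSx.posSemidef_sqrt.isHermitian
    rwa [IsHermitian, conjTranspose_eq_transpose_of_trivial] at this
  have hSS : S * S = Sx := hSx.sqrt_mul_self
  set A := Φ * S with hAdef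
  have hAT : Aᴴ = S * Φᵀ := by
    rw [conjTranspose_eq_transpose_of_trivial, hAdef, transpose_mul, hSsymm]
  have hΦSx : Φ * Sx * Φᵀ = A * Aᴴ := by
    rw [hAT, hAdef, ← hSS]; simp only [Matrix.mul_assoc]
  have hSig : S * Φᵀ * Φ * S = Aᴴ * A := by
    rw [hAT, hAdef]; simp only [Matrix.mul_assoc]
  set B := σ2 • (1 : Matrix (Fin l) (Fin l) ℝ) + Φ * Sx * Φᵀ with hBdef
  set C := σ2 • (1 : Matrix (Fin n) (Fin n) ℝ) + Aᴴ * A with hCdef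
  have hBpd : B.PosDef := by
    rw [hBdef, hΦSx]
    exact (smul_one_posDef hσ2).add_posSemidef (posSemidef_self_mul_conjTranspose A)
  have hCpd : C.PosDef := by
    exact (smul_one_posDef hσ2).add_posSemidef (posSemidef_conjTranspose_mul_self A)
  have hBdet : IsUnit B.det := hBpd.det_pos.ne'.isUnit
  have hCdet : IsUnit C.det := hCpd.det_pos.ne'.isUnit
  -- rewrite 1 + σ2⁻¹ • Σ as σ2⁻¹ • C
  have hID : (1 : Matrix (Fin n) (Fin n) ℝ) + σ2⁻¹ • (S * Φᵀ * Φ * S) = σ2⁻¹ • C := by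
    rw [hSig, hCdef, smul_add, smul_smul, inv_mul_cancel₀ hσ2.ne', one_smul]
  have hDdet : IsUnit ((1 : Matrix (Fin n) (Fin n) ℝ) + σ2⁻¹ • (S * Φᵀ * Φ * S)).det := by
    rw [hID, det_smul]
    exact (IsUnit.pow _ (isUnit_iff_ne_zero.mpr (inv_ne_zero hσ2.ne'))).mul hCdet
  refine ⟨hBpd, hBdet, hDdet, ?_⟩
  -- push-through identity
  have hpush : Aᴴ * B = C * Aᴴ := by
    rw [hBdef, hCdef, hΦSx]
    simp only [Matrix.mul_add, Matrix.add_mul, Matrix.mul_smul, Matrix.smul_mul,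
      Matrix.mul_one, Matrix.one_mul, Matrix.mul_assoc]
  have hCinvA : C⁻¹ * Aᴴ = Aᴴ * B⁻¹ := by
    have h1 : C⁻¹ * Aᴴ * B = Aᴴ := by
      rw [Matrix.mul_assoc, hpush, ← Matrix.mul_assoc, Matrix.nonsing_inv_mul _ hCdet,
        Matrix.one_mul]
    calc C⁻¹ * Aᴴ = C⁻¹ * Aᴴ * B * B⁻¹ := by
          rw [Matrix.mul_assoc, Matrix.mul_nonsing_inv _ hBdet, Matrix.mul_one]
      _ = Aᴴ * B⁻¹ := by rw [h1]
  -- key matrix identity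
  have hkey : Sx * Φᵀ * B⁻¹ * Φ * Sx = Sx - σ2 • (S * C⁻¹ * S) := by
    have h1 : Sx * Φᵀ * B⁻¹ * Φ * Sx = S * (Aᴴ * B⁻¹) * (A * S) := by
      rw [hAT, hAdef, ← hSS]
      simp only [Matrix.mul_assoc]
    rw [h1, ← hCinvA]
    have hAA : Aᴴ * A = C - σ2 • (1 : Matrix (Fin n) (Fin n) ℝ) := by
      rw [hCdef]; abel
    calc S * (C⁻¹ * Aᴴ) * (A * S)
        = S * (C⁻¹ * (Aᴴ * A)) * S := by simp only [Matrix.mul_assoc]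
      _ = S * (C⁻¹ * (C - σ2 • 1)) * S := by rw [hAA]
      _ = S * S - σ2 • (S * C⁻¹ * S) := by
          rw [Matrix.mul_sub, Matrix.nonsing_inv_mul _ hCdet]
          simp only [Matrix.mul_sub, Matrix.sub_mul, Matrix.mul_smul, Matrix.smul_mul,
            Matrix.mul_one, Matrix.one_mul, Matrix.mul_assoc]
      _ = Sx - σ2 • (S * C⁻¹ * S) := by rw [hSS]
  have hIDinv : ((1 : Matrix (Fin n) (Fin n) ℝ) + σ2⁻¹ • (S * Φᵀ * Φ * S))⁻¹
      = σ2 • C⁻¹ := by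
    rw [hID]
    refine Matrix.inv_eq_right_inv ?_
    rw [Matrix.smul_mul, Matrix.mul_smul, smul_smul, inv_mul_cancel₀ hσ2.ne', one_smul,
      Matrix.mul_nonsing_inv _ hCdet]
  rw [hkey, hIDinv]
  rw [sub_sub_cancel, trace_smul, Matrix.mul_smul, trace_smul]
  congr 1
  rw [Matrix.mul_assoc, trace_mul_comm, Matrix.mul_assoc, hSS]
  exact trace_mul_comm _ _
end

section
/- Let Σ_x be a real n×n positive semidefinite matrix, Φ a real ℓ×n matrix, and Σ := Σ_x^{1/2}·Φᵀ·Φ·Σ_x^{1/2}. Let u₁,…,u_n be an orthonormal basis of ℝⁿ consisting of eigenvectors of Σ, with Σ·uᵢ = λᵢ·uᵢ and λᵢ ≥ 0. Then lim_{σ²→0⁺} (MMSE(σ²) − Σ_{i : λᵢ = 0} uᵢᵀ·Σ_x·uᵢ) / σ² = Σ_{i : λᵢ > 0} (1/λᵢ) · uᵢᵀ·Σ_x·uᵢ. In other words, MMSE(σ²) = M_∞ + D·σ² + o(σ²) as σ² → 0⁺, with M_∞ = Σ_{i : λᵢ = 0} uᵢᵀ·Σ_x·uᵢ and D = Σ_{i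 : λᵢ > 0} λᵢ⁻¹·uᵢᵀ·Σ_x·uᵢ. -/
open Matrix Filter Topology
open scoped MatrixOrder

/-- Trace via an orthonormal basis given as rows. -/
lemma trace_eq_sum_ortho {n : ℕ} (u : Fin n → Fin n → ℝ)
    (hortho : ∀ i j, u i ⬝ᵥ u j = if i = j then 1 else 0)
    (M : Matrix (Fin n) (Fin n) ℝ) :
    M.trace = ∑ i, u i ⬝ᵥ M.mulVec (u i) := by
  set U : Matrix (Fin n) (Fin n) ℝ := Matrix.of u with hU
  have hUU : U * Uᵀ = 1 := by
    ext i j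
    simpa [hU, Matrix.mul_apply, Matrix.one_apply, dotProduct] using hortho i j
  have hUU' : Uᵀ * U = 1 := mul_eq_one_comm.mp hUU
  have key : (U * M * Uᵀ).trace = M.trace := by
    rw [Matrix.trace_mul_cycle, hUU', Matrix.one_mul]
  rw [← key, Matrix.trace]
  congr 1
  ext i
  simp only [Matrix.diag, Matrix.mul_apply, Matrix.transpose_apply, Matrix.mulVec, dotProduct,
    hU, Matrix.of_apply, Finset.sum_mul, Finset.mul_sum]
  rw [Finset.sum_comm]
  apply Finset.sum_congr rfl
  intros
  apply Finset.sum_congr rfl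
  intros
  ring

/-- With an orthonormal eigenbasis (uᵢ, λᵢ) of Σ = Σ_x^{1/2}·Φᵀ·Φ·Σ_x^{1/2},
MMSE(σ²) = M_∞ + D·σ² + o(σ²) as σ² → 0⁺, where M_∞ = ∑_{i : λᵢ = 0} uᵢᵀ·Σ_x·uᵢ and
D = ∑_{i : λᵢ > 0} λᵢ⁻¹·uᵢᵀ·Σ_x·uᵢ; i.e. (MMSE(σ²) − M_∞)/σ² → D. -/
theorem stmt_3 {n l : ℕ} (Sx : Matrix (Fin n) (Fin n) ℝ) (hSx : Sx.PosSemidef)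
    (Φ : Matrix (Fin l) (Fin n) ℝ)
    (u : Fin n → Fin n → ℝ) (lam : Fin n → ℝ)
    (hortho : ∀ i j, u i ⬝ᵥ u j = if i = j then 1 else 0)
    (heig : ∀ i, (CFC.sqrt Sx * Φᵀ * Φ * CFC.sqrt Sx).mulVec (u i) = lam i • u i)
    (hnonneg : ∀ i, 0 ≤ lam i) :
    Tendsto (fun σ2 : ℝ =>
        ((Sx - Sx * Φᵀ * (σ2 • (1 : Matrix (Fin l) (Fin l) ℝ) + Φ * Sx * Φᵀ)⁻¹ * Φ * Sx).trace
          - ∑ i ∈ Finset.univ.filter (fun i => lam i = 0), u i ⬝ᵥ Sx.mulVec (u i)) / σ2)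
      (nhdsWithin 0 (Set.Ioi 0))
      (nhds (∑ i ∈ Finset.univ.filter (fun i => 0 < lam i),
        (lam i)⁻¹ * (u i ⬝ᵥ Sx.mulVec (u i)))) := by
  set S := CFC.sqrt Sx with hSdef
  have hSsymm : Sᵀ = S := (CFC.sqrt_nonneg Sx).posSemidef.isHermitian.eq
  have hS2 : S * S = Sx := CFC.sqrt_mul_sqrt_self Sx hSx.nonneg
  set A := Φ * S with hA
  set Sig := S * Φᵀ * Φ * S with hSig
  have e1 : Sx * Φᵀ = S * Aᵀ := by
    rw [← hS2, hA, Matrix.transpose_mul, hSsymm, Matrix.mul_assoc]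
  have e2 : Φ * Sx = A * S := by rw [← hS2, hA, ← Matrix.mul_assoc]
  have e3 : Φ * Sx * Φᵀ = A * Aᵀ := by
    rw [e2, hA, Matrix.transpose_mul, hSsymm, Matrix.mul_assoc]
  have hSigAA : Sig = Aᵀ * A := by
    rw [hSig, hA, Matrix.transpose_mul, hSsymm, Matrix.mul_assoc, ← Matrix.mul_assoc]
  have hSigPSD : Sig.PosSemidef := by
    rw [hSigAA, ← Matrix.conjTranspose_eq_transpose_of_trivial]
    exact Matrix.posSemidef_conjTranspose_mul_self A
  have hAAPSD : (A * Aᵀ).PosSemidef := by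
    rw [← Matrix.conjTranspose_eq_transpose_of_trivial]
    exact Matrix.posSemidef_self_mul_conjTranspose A
  set q : Fin n → ℝ := fun i => u i ⬝ᵥ Sx.mulVec (u i) with hq
  -- main pointwise lemma
  have main : ∀ σ2 : ℝ, 0 < σ2 →
      ((Sx - Sx * Φᵀ * (σ2 • (1 : Matrix (Fin l) (Fin l) ℝ) + Φ * Sx * Φᵀ)⁻¹ * Φ * Sx).trace
          - ∑ i ∈ Finset.univ.filter (fun i => lam i = 0), q i) / σ2
      = ∑ i ∈ Finset.univ.filter (fun i => 0 < lam i), (σ2 + lam i)⁻¹ * q i := by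
    intro σ2 hσ2
    have hσ2ne : σ2 ≠ 0 := hσ2.ne'
    have hsmul1 : (σ2 • (1 : Matrix (Fin n) (Fin n) ℝ)).PosDef := by
      rw [Matrix.smul_one_eq_diagonal]
      exact Matrix.posDef_diagonal_iff.mpr fun _ => hσ2
    have hsmul1' : (σ2 • (1 : Matrix (Fin l) (Fin l) ℝ)).PosDef := by
      rw [Matrix.smul_one_eq_diagonal]
      exact Matrix.posDef_diagonal_iff.mpr fun _ => hσ2
    set C : Matrix (Fin n) (Fin n) ℝ := σ2 • 1 + Sig with hC
    set B : Matrix (Fin l) (Fin l) ℝ := σ2 • 1 + Φ * Sx * Φᵀ with hB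
    have hBAA : B = σ2 • 1 + A * Aᵀ := by rw [hB, e3]
    have hCpd : C.PosDef := hsmul1.add_posSemidef hSigPSD
    have hBpd : B.PosDef := by rw [hBAA]; exact hsmul1'.add_posSemidef hAAPSD
    have hCdet : IsUnit C.det := hCpd.det_pos.ne'.isUnit
    have hBdet : IsUnit B.det := hBpd.det_pos.ne'.isUnit
    -- push-through
    have push : Aᵀ * B⁻¹ = C⁻¹ * Aᵀ := by
      have h1 : C * Aᵀ = Aᵀ * B := by
        rw [hC, hBAA, hSigAA]
        simp only [Matrix.add_mul, Matrix.mul_add, Matrix.smul_mul, Matrix.mul_smul,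
          Matrix.one_mul, Matrix.mul_one]
        rw [Matrix.mul_assoc]
      calc Aᵀ * B⁻¹ = C⁻¹ * (C * Aᵀ) * B⁻¹ := by
            rw [← Matrix.mul_assoc, Matrix.nonsing_inv_mul _ hCdet, Matrix.one_mul]
        _ = C⁻¹ * Aᵀ * (B * B⁻¹) := by rw [h1]; simp only [Matrix.mul_assoc]
        _ = C⁻¹ * Aᵀ := by rw [Matrix.mul_nonsing_inv _ hBdet, Matrix.mul_one]
    -- rewrite the big matrix product
    have prod_eq : Sx * Φᵀ * B⁻¹ * Φ * Sx = S * (C⁻¹ * Sig) * S := by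
      calc Sx * Φᵀ * B⁻¹ * Φ * Sx = S * Aᵀ * B⁻¹ * (Φ * Sx) := by
            rw [e1, Matrix.mul_assoc (S * Aᵀ * B⁻¹) Φ Sx]
        _ = S * (Aᵀ * B⁻¹) * (A * S) := by rw [e2]; simp only [Matrix.mul_assoc]
        _ = S * (C⁻¹ * (Aᵀ * A)) * S := by rw [push]; simp only [Matrix.mul_assoc]
        _ = S * (C⁻¹ * Sig) * S := by rw [hSigAA]
    -- trace computation
    have tr1 : (Sx - Sx * Φᵀ * B⁻¹ * Φ * Sx).trace = σ2 * (Sx * C⁻¹).trace := by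
      rw [Matrix.trace_sub, prod_eq]
      have h0 : (S * (C⁻¹ * Sig) * S).trace = (C⁻¹ * Sig * Sx).trace := by
        rw [Matrix.trace_mul_cycle S (C⁻¹ * Sig) S, hS2, Matrix.trace_mul_comm]
      rw [h0]
      have h2 : Sx.trace - (C⁻¹ * Sig * Sx).trace = ((1 - C⁻¹ * Sig) * Sx).trace := by
        rw [Matrix.sub_mul, Matrix.one_mul, Matrix.trace_sub]
      rw [h2]
      have h3 : (1 : Matrix (Fin n) (Fin n) ℝ) - C⁻¹ * Sig = σ2 • C⁻¹ := by
        have h4 : (1 : Matrix (Fin n) (Fin n) ℝ) = C⁻¹ * C := (Matrix.nonsing_inv_mul _ hCdet).symm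
        rw [h4, ← Matrix.mul_sub, hC, add_sub_cancel_right, Matrix.mul_smul, Matrix.mul_one]
      rw [h3, Matrix.smul_mul, Matrix.trace_smul, smul_eq_mul, Matrix.trace_mul_comm]
    -- eigenvector computation for C⁻¹
    have hCinv_eig : ∀ i, C⁻¹.mulVec (u i) = (σ2 + lam i)⁻¹ • u i := by
      intro i
      have hpos : (0:ℝ) < σ2 + lam i := by linarith [hnonneg i]
      have hCu : C.mulVec (u i) = (σ2 + lam i) • u i := by
        rw [hC, Matrix.add_mulVec, Matrix.smul_mulVec, Matrix.one_mulVec, heig i, add_smul]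
      have hkey : u i = (σ2 + lam i) • C⁻¹.mulVec (u i) := by
        calc u i = (C⁻¹ * C).mulVec (u i) := by
              rw [Matrix.nonsing_inv_mul _ hCdet, Matrix.one_mulVec]
          _ = C⁻¹.mulVec (C.mulVec (u i)) := by rw [← Matrix.mulVec_mulVec]
          _ = (σ2 + lam i) • C⁻¹.mulVec (u i) := by rw [hCu, Matrix.mulVec_smul]
      have h4 : (σ2 + lam i)⁻¹ • u i = (σ2 + lam i)⁻¹ • ((σ2 + lam i) • C⁻¹.mulVec (u i)) := by
        rw [← hkey]
      rw [h4, smul_smul, inv_mul_cancel₀ hpos.ne', one_smul]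
    have tr2 : (Sx * C⁻¹).trace = ∑ i, (σ2 + lam i)⁻¹ * q i := by
      rw [trace_eq_sum_ortho u hortho]
      congr 1
      ext i
      rw [← Matrix.mulVec_mulVec, hCinv_eig i, Matrix.mulVec_smul, dotProduct_smul,
        smul_eq_mul]
    rw [tr1, tr2]
    -- split the sum
    have hsplit : ∑ i, (σ2 + lam i)⁻¹ * q i
        = (∑ i ∈ Finset.univ.filter (fun i => lam i = 0), σ2⁻¹ * q i)
          + ∑ i ∈ Finset.univ.filter (fun i => 0 < lam i), (σ2 + lam i)⁻¹ * q i := by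
      rw [← Finset.sum_filter_add_sum_filter_not Finset.univ (fun i => lam i = 0)]
      congr 1
      · apply Finset.sum_congr rfl
        intro i hi
        simp only [Finset.mem_filter] at hi
        rw [hi.2, add_zero]
      · apply Finset.sum_congr
        · apply Finset.filter_congr
          intro i _
          constructor
          · intro h; exact lt_of_le_of_ne (hnonneg i) (Ne.symm h)
          · intro h h0; exact h.ne' h0
        · intros; rfl
    have h0 : σ2 * ∑ i ∈ Finset.univ.filter (fun i => lam i = 0), σ2⁻¹ * q i
        = ∑ i ∈ Finset.univ.filter (fun i => lam i = 0), q i := by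
      rw [Finset.mul_sum]
      apply Finset.sum_congr rfl
      intros
      rw [← mul_assoc, mul_inv_cancel₀ hσ2ne, one_mul]
    rw [div_eq_iff hσ2ne, hsplit, mul_add, h0]
    ring
  -- now the limit
  have hcongr : ∀ᶠ σ2 in nhdsWithin (0:ℝ) (Set.Ioi 0),
      ((Sx - Sx * Φᵀ * (σ2 • (1 : Matrix (Fin l) (Fin l) ℝ) + Φ * Sx * Φᵀ)⁻¹ * Φ * Sx).trace
          - ∑ i ∈ Finset.univ.filter (fun i => lam i = 0), q i) / σ2
      = ∑ i ∈ Finset.univ.filter (fun i => 0 < lam i), (σ2 + lam i)⁻¹ * q i := by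
    filter_upwards [self_mem_nhdsWithin] with σ2 hσ2
    exact main σ2 hσ2
  rw [tendsto_congr' hcongr]
  have hlim : Tendsto (fun σ2 : ℝ => ∑ i ∈ Finset.univ.filter (fun i => 0 < lam i),
      (σ2 + lam i)⁻¹ * q i) (nhds 0)
      (nhds (∑ i ∈ Finset.univ.filter (fun i => 0 < lam i), (lam i)⁻¹ * q i)) := by
    apply tendsto_finset_sum
    intro i hi
    simp only [Finset.mem_filter] at hi
    have hne : lam i ≠ 0 := hi.2.ne'
    have ht : Tendsto (fun σ2 : ℝ => (σ2 + lam i)⁻¹ * q i) (nhds 0)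
        (nhds ((0 + lam i)⁻¹ * q i)) := by
      apply Tendsto.mul _ tendsto_const_nhds
      apply Tendsto.inv₀
      · exact (continuous_id.add continuous_const).tendsto 0
      · rw [zero_add]; exact hne
    simpa using ht
  exact hlim.mono_left nhdsWithin_le_nhds
end

section
/- Let Σ_x be a real n×n positive semidefinite matrix and Φ a real ℓ×n matrix. If MMSE(σ²) tends to 0 as σ² → 0⁺, then rank(Σ_x) ≤ ℓ. (Necessary condition on the number of measurements for perfect reconstruction of a Gaussian source in the low-noise regime.) -/
open Matrix Filter Topology
open scoped MatrixOrder

/-- For a real PSD matrix `P`, the quadratic form is bounded by `(u ⬝ᵥ u) * trace P`. -/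
lemma psd_quad_le_trace {n : ℕ} {P : Matrix (Fin n) (Fin n) ℝ} (hP : P.PosSemidef)
    (u : Fin n → ℝ) : u ⬝ᵥ P *ᵥ u ≤ (u ⬝ᵥ u) * P.trace := by
  set F := CFC.sqrt P with hFdef
  have hF : F * F = P := CFC.sqrt_mul_sqrt_self P hP.nonneg
  have hFt : Fᵀ = F := by
    have := (CFC.sqrt_nonneg P).posSemidef.isHermitian
    rwa [IsHermitian, conjTranspose_eq_transpose_of_trivial] at this
  have hquad : u ⬝ᵥ P *ᵥ u = (F *ᵥ u) ⬝ᵥ (F *ᵥ u) := by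
    rw [← hF, ← mulVec_mulVec, dotProduct_mulVec, ← mulVec_transpose, hFt]
  have htr : P.trace = ∑ i, ∑ j, (F i j) ^ 2 := by
    rw [← hF, trace]
    congr 1
    ext i
    simp only [diag_apply, mul_apply]
    congr 1
    ext j
    have : F j i = F i j := by conv_lhs => rw [← hFt, transpose_apply]
    rw [this, sq]
  rw [hquad, htr]
  have hterm : ∀ i, (F *ᵥ u) i * (F *ᵥ u) i ≤ (∑ j, (F i j) ^ 2) * (∑ j, (u j) ^ 2) := by
    intro i
    have := Finset.sum_mul_sq_le_sq_mul_sq Finset.univ (fun j => F i j) u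
    simpa [mulVec, dotProduct, sq] using this
  calc (F *ᵥ u) ⬝ᵥ (F *ᵥ u) = ∑ i, (F *ᵥ u) i * (F *ᵥ u) i := rfl
    _ ≤ ∑ i, (∑ j, (F i j) ^ 2) * (∑ j, (u j) ^ 2) := Finset.sum_le_sum fun i _ => hterm i
    _ = (u ⬝ᵥ u) * ∑ i, ∑ j, (F i j) ^ 2 := by
        rw [← Finset.sum_mul, mul_comm]
        congr 1
        simp [dotProduct, sq]

lemma posDef_smul_one {k : ℕ} {σ2 : ℝ} (hσ2 : 0 < σ2) :
    (σ2 • (1 : Matrix (Fin k) (Fin k) ℝ)).PosDef := by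
  rw [smul_one_eq_diagonal]
  exact posDef_diagonal_iff.mpr fun _ => hσ2

/-- If MMSE(σ²) → 0 as σ² → 0⁺, then rank(Σ_x) ≤ ℓ. -/
theorem stmt_6 {n l : ℕ} (Sx : Matrix (Fin n) (Fin n) ℝ) (hSx : Sx.PosSemidef)
    (Φ : Matrix (Fin l) (Fin n) ℝ)
    (h : Tendsto (fun σ2 : ℝ =>
        (Sx - Sx * Φᵀ * (σ2 • (1 : Matrix (Fin l) (Fin l) ℝ) + Φ * Sx * Φᵀ)⁻¹ * Φ * Sx).trace)
      (nhdsWithin 0 (Set.Ioi 0)) (nhds 0)) :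
    Sx.rank ≤ l := by
  by_contra hlt
  push_neg at hlt
  -- rank of Φ * Sx is at most l
  have hrankΦSx : (Φ * Sx).rank ≤ l := by
    refine le_trans (Matrix.rank_mul_le_left Φ Sx) ?_
    simpa using Φ.rank_le_card_height
  -- kernel dimension comparison
  have h1 : (Φ * Sx).rank + Module.finrank ℝ (LinearMap.ker (Φ * Sx).mulVecLin) = n := by
    rw [Matrix.rank]
    simpa using LinearMap.finrank_range_add_finrank_ker (Φ * Sx).mulVecLin
  have h2 : Sx.rank + Module.finrank ℝ (LinearMap.ker Sx.mulVecLin) = n := by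
    rw [Matrix.rank]
    simpa using LinearMap.finrank_range_add_finrank_ker Sx.mulVecLin
  have hker : ¬ (LinearMap.ker (Φ * Sx).mulVecLin ≤ LinearMap.ker Sx.mulVecLin) := by
    intro hle
    have := Submodule.finrank_mono hle
    omega
  obtain ⟨v, hv1, hv2⟩ := SetLike.not_le_iff_exists.mp hker
  rw [LinearMap.mem_ker, mulVecLin_apply] at hv1
  rw [LinearMap.mem_ker, mulVecLin_apply] at hv2
  -- v ⬝ᵥ Sx *ᵥ v > 0
  set c := v ⬝ᵥ Sx *ᵥ v with hcdef
  have hc0 : 0 < c := by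
    have hne : c ≠ 0 := by
      intro hc
      apply hv2
      have := (hSx.dotProduct_mulVec_zero_iff v).mp (by simpa [hcdef] using hc)
      exact this
    have hnonneg : 0 ≤ c := by simpa using hSx.dotProduct_mulVec_nonneg v
    exact lt_of_le_of_ne hnonneg (Ne.symm hne)
  have hvne : v ≠ 0 := by
    intro hv0
    exact hv2 (by simp [hv0])
  have hvv : 0 < v ⬝ᵥ v := by
    have hne : v ⬝ᵥ v ≠ 0 := fun e => hvne (dotProduct_self_eq_zero.mp e)
    have hge : (0:ℝ) ≤ v ⬝ᵥ v := Finset.sum_nonneg fun i _ => mul_self_nonneg _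
    exact lt_of_le_of_ne hge (Ne.symm hne)
  -- square root of Sx
  set S := CFC.sqrt Sx with hSdef
  have hS : S * S = Sx := CFC.sqrt_mul_sqrt_self Sx hSx.nonneg
  have hSt : Sᵀ = S := by
    have := (CFC.sqrt_nonneg Sx).posSemidef.isHermitian
    rwa [IsHermitian, conjTranspose_eq_transpose_of_trivial] at this
  set C := Φ * S with hCdef
  have hCS : C * S = Φ * Sx := by rw [hCdef, Matrix.mul_assoc, hS]
  have hSC : S * Cᵀ = Sx * Φᵀ := by
    rw [hCdef, transpose_mul, hSt, ← Matrix.mul_assoc, hS]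
  -- main uniform lower bound
  have key : ∀ σ2 : ℝ, 0 < σ2 →
      c / (v ⬝ᵥ v) ≤
      (Sx - Sx * Φᵀ * (σ2 • (1 : Matrix (Fin l) (Fin l) ℝ) + Φ * Sx * Φᵀ)⁻¹ * Φ * Sx).trace := by
    intro σ2 hσ2
    set K := σ2 • (1 : Matrix (Fin l) (Fin l) ℝ) + Φ * Sx * Φᵀ with hKdef
    set A := σ2 • (1 : Matrix (Fin n) (Fin n) ℝ) + Cᵀ * C with hAdef
    have hCCt : Φ * Sx * Φᵀ = C * Cᵀ := by
      rw [hCdef, transpose_mul, hSt, Matrix.mul_assoc, Matrix.mul_assoc, ← Matrix.mul_assoc S,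
        hS]
    have hCtC_psd : (Cᵀ * C).PosSemidef := by
      have := posSemidef_conjTranspose_mul_self C
      rwa [conjTranspose_eq_transpose_of_trivial] at this
    have hCCt_psd : (C * Cᵀ).PosSemidef := by
      have := posSemidef_self_mul_conjTranspose C
      rwa [conjTranspose_eq_transpose_of_trivial] at this
    have hA_pd : A.PosDef := (posDef_smul_one hσ2).add_posSemidef hCtC_psd
    have hK_pd : K.PosDef := by
      rw [hKdef, hCCt]
      exact (posDef_smul_one hσ2).add_posSemidef hCCt_psd
    have hA_unit : IsUnit A.det := isUnit_iff_ne_zero.mpr hA_pd.det_pos.ne'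
    have hK_unit : IsUnit K.det := isUnit_iff_ne_zero.mpr hK_pd.det_pos.ne'
    -- the intertwining identity
    have hCK : Cᵀ * K = A * Cᵀ := by
      rw [hKdef, hAdef, hCCt, Matrix.mul_add, Matrix.add_mul, Matrix.mul_smul,
        Matrix.smul_mul, Matrix.mul_one, Matrix.one_mul, ← Matrix.mul_assoc,
        ← Matrix.mul_assoc]
    have hCKinv : Cᵀ * K⁻¹ = A⁻¹ * Cᵀ := by
      calc Cᵀ * K⁻¹ = (A⁻¹ * A) * (Cᵀ * K⁻¹) := by
            rw [Matrix.nonsing_inv_mul A hA_unit, Matrix.one_mul]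
        _ = A⁻¹ * ((A * Cᵀ) * K⁻¹) := by simp only [Matrix.mul_assoc]
        _ = A⁻¹ * ((Cᵀ * K) * K⁻¹) := by rw [hCK]
        _ = A⁻¹ * (Cᵀ * (K * K⁻¹)) := by simp only [Matrix.mul_assoc]
        _ = A⁻¹ * Cᵀ := by rw [Matrix.mul_nonsing_inv K hK_unit, Matrix.mul_one]
    -- rewrite the error matrix
    have hE : Sx - Sx * Φᵀ * K⁻¹ * Φ * Sx = σ2 • (S * A⁻¹ * S) := by
      have h1 : Sx * Φᵀ * K⁻¹ * Φ * Sx = S * (A⁻¹ * (Cᵀ * C)) * S := by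
        calc Sx * Φᵀ * K⁻¹ * Φ * Sx
            = (Sx * Φᵀ) * K⁻¹ * (Φ * Sx) := by
              rw [Matrix.mul_assoc (Sx * Φᵀ * K⁻¹)]
          _ = (S * Cᵀ) * K⁻¹ * (C * S) := by rw [hSC, hCS]
          _ = S * (Cᵀ * K⁻¹) * (C * S) := by rw [Matrix.mul_assoc S]
          _ = S * (A⁻¹ * Cᵀ) * (C * S) := by rw [hCKinv]
          _ = S * (A⁻¹ * (Cᵀ * C)) * S := by simp only [Matrix.mul_assoc]
      have h2 : A⁻¹ * (Cᵀ * C) = 1 - σ2 • A⁻¹ := by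
        have hCtC : Cᵀ * C = A - σ2 • (1 : Matrix (Fin n) (Fin n) ℝ) := by
          rw [hAdef, add_sub_cancel_left]
        rw [hCtC, Matrix.mul_sub, Matrix.nonsing_inv_mul A hA_unit, Matrix.mul_smul,
          Matrix.mul_one]
      rw [h1, h2, Matrix.mul_sub, Matrix.mul_one, Matrix.mul_smul, Matrix.sub_mul, hS,
        Matrix.smul_mul, sub_sub_cancel]
    -- positive semidefiniteness of the rewritten matrix
    have hP0 : (S * A⁻¹ * S).PosSemidef := by
      have hAinv : A⁻¹.PosSemidef := hA_pd.posSemidef.inv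
      have := hAinv.mul_mul_conjTranspose_same S
      rwa [conjTranspose_eq_transpose_of_trivial, hSt] at this
    -- quadratic form value
    have hCSv : C *ᵥ (S *ᵥ v) = 0 := by rw [mulVec_mulVec, hCS, hv1]
    have hASv : A *ᵥ (S *ᵥ v) = σ2 • (S *ᵥ v) := by
      rw [hAdef, add_mulVec, smul_mulVec, one_mulVec, ← mulVec_mulVec, hCSv,
        mulVec_zero, add_zero]
    have hAinvSv : A⁻¹ *ᵥ (S *ᵥ v) = σ2⁻¹ • (S *ᵥ v) := by
      have h3 : (S *ᵥ v) = σ2 • (A⁻¹ *ᵥ (S *ᵥ v)) := by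
        calc S *ᵥ v = (A⁻¹ * A) *ᵥ (S *ᵥ v) := by
              rw [Matrix.nonsing_inv_mul A hA_unit, one_mulVec]
          _ = A⁻¹ *ᵥ (A *ᵥ (S *ᵥ v)) := by rw [← mulVec_mulVec]
          _ = σ2 • (A⁻¹ *ᵥ (S *ᵥ v)) := by rw [hASv, mulVec_smul]
      calc A⁻¹ *ᵥ (S *ᵥ v) = σ2⁻¹ • (σ2 • (A⁻¹ *ᵥ (S *ᵥ v))) := by
            rw [smul_smul, inv_mul_cancel₀ hσ2.ne', one_smul]
        _ = σ2⁻¹ • (S *ᵥ v) := by rw [← h3]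
    have hquadval : v ⬝ᵥ (S * A⁻¹ * S) *ᵥ v = σ2⁻¹ * c := by
      have : (S * A⁻¹ * S) *ᵥ v = σ2⁻¹ • (Sx *ᵥ v) := by
        calc (S * A⁻¹ * S) *ᵥ v = S *ᵥ (A⁻¹ *ᵥ (S *ᵥ v)) := by
              rw [mulVec_mulVec, mulVec_mulVec]
          _ = σ2⁻¹ • (S *ᵥ (S *ᵥ v)) := by rw [hAinvSv, mulVec_smul]
          _ = σ2⁻¹ • (Sx *ᵥ v) := by rw [mulVec_mulVec, hS]
      rw [this, dotProduct_smul, hcdef]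
      rfl
    -- trace bound
    have hbound := psd_quad_le_trace hP0 v
    rw [hE, div_le_iff₀ hvv, trace_smul, smul_eq_mul]
    rw [hquadval] at hbound
    calc c = σ2 * (σ2⁻¹ * c) := by
          rw [← mul_assoc, mul_inv_cancel₀ hσ2.ne', one_mul]
      _ ≤ σ2 * ((v ⬝ᵥ v) * (S * A⁻¹ * S).trace) :=
          mul_le_mul_of_nonneg_left hbound hσ2.le
      _ = σ2 * (S * A⁻¹ * S).trace * (v ⬝ᵥ v) := by ring
  -- contradiction with the limit
  have hev : ∀ᶠ σ2 in nhdsWithin (0:ℝ) (Set.Ioi 0),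
      c / (v ⬝ᵥ v) ≤
      (Sx - Sx * Φᵀ * (σ2 • (1 : Matrix (Fin l) (Fin l) ℝ) + Φ * Sx * Φᵀ)⁻¹ * Φ * Sx).trace :=
    eventually_nhdsWithin_of_forall fun σ2 hσ2 => key σ2 hσ2
  have hle := ge_of_tendsto h hev
  have hpos : 0 < c / (v ⬝ᵥ v) := div_pos hc0 hvv
  exact absurd hle (not_le.mpr hpos)
end

section
/- Let B be a real n×n positive semidefinite matrix, x ∈ ℝⁿ, and Φ a real ℓ×n matrix. If rank(Φ·(B + x·xᵀ)·Φᵀ) = rank(B) + 1, then Φ·x ∉ range(Φ·B·Φᵀ), where range denotes the column space. -/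
open Matrix

/-- For positive semidefinite B, x ∈ ℝⁿ and Φ an ℓ×n matrix, if
rank(Φ·(B + x·xᵀ)·Φᵀ) = rank(B) + 1 then Φ·x ∉ range(Φ·B·Φᵀ). -/
theorem stmt_10 {n l : ℕ} (B : Matrix (Fin n) (Fin n) ℝ) (hB : B.PosSemidef)
    (x : Fin n → ℝ) (Φ : Matrix (Fin l) (Fin n) ℝ)
    (h : (Φ * (B + Matrix.vecMulVec x x) * Φᵀ).rank = B.rank + 1) :
    Φ.mulVec x ∉ LinearMap.range (Φ * B * Φᵀ).mulVecLin := by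
  rintro ⟨y, hy⟩
  simp only [mulVecLin_apply] at hy
  have hvv : ∀ w : Fin n → ℝ, (Matrix.vecMulVec x x).mulVec w = (x ⬝ᵥ w) • x := by
    intro w
    ext i
    simp only [vecMulVec_apply, mulVec, dotProduct, Pi.smul_apply, smul_eq_mul, Finset.sum_mul]
    exact Finset.sum_congr rfl fun _ _ => by ring
  have hle : LinearMap.range (Φ * (B + Matrix.vecMulVec x x) * Φᵀ).mulVecLin ≤
      LinearMap.range (Φ * B * Φᵀ).mulVecLin := by
    rintro _ ⟨z, rfl⟩
    refine ⟨z + ((x ⬝ᵥ Φᵀ.mulVec z) • y), ?_⟩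
    simp only [mulVecLin_apply, mul_add, add_mul, add_mulVec, mulVec_add, mulVec_smul,
      ← mulVec_mulVec]
    simp only [← mulVec_mulVec] at hy
    rw [hvv, mulVec_smul, hy]
  have h1 : (Φ * (B + Matrix.vecMulVec x x) * Φᵀ).rank ≤ (Φ * B * Φᵀ).rank :=
    Submodule.finrank_mono hle
  have h2 : (Φ * B * Φᵀ).rank ≤ B.rank :=
    le_trans (rank_mul_le_left _ _) (rank_mul_le_right _ _)
  omega
end

section
/- Let n ≥ ℓ ≥ 1, let U be a real n×n orthogonal matrix, let λ₁ ≥ λ₂ ≥ … ≥ λ_s > 0 and λᵢ = 0 for i > s, and set Σ_x = U·diag(λ₁,…,λ_n)·Uᵀ and ℓ' = min(ℓ, s). Let Φ be the ℓ×n matrix Φ = [diag(√d₁,…,√d_ℓ) 0_{ℓ×(n−ℓ)}]·Uᵀ with dᵢ = ℓ/ℓ' for i ≤ ℓ' and dᵢ = 0 for ℓ' < i ≤ ℓ. Then lim_{σ²→0⁺} (MMSE(σ²) − Σ_{i=ℓ'+1}^{s} λᵢ)/σ² = (ℓ')²/ℓ; that is, MMSE(σ²) = Σ_{i=ℓ'+1}^{s}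 λᵢ + ((ℓ')²/ℓ)·σ² + o(σ²) as σ² → 0⁺. -/
open Matrix Filter Topology

/-- With Σ_x = U·diag(λ)·Uᵀ, λ₁ ≥ … ≥ λ_s > 0, λᵢ = 0 for i > s,
ℓ' = min(ℓ, s), and the designed kernel Φ = [diag(√d) 0]·Uᵀ with dᵢ = ℓ/ℓ' for i ≤ ℓ'
and dᵢ = 0 otherwise, we have MMSE(σ²) = ∑_{i=ℓ'+1}^{s} λᵢ + ((ℓ')²/ℓ)·σ² + o(σ²) as
σ² → 0⁺, i.e. (MMSE(σ²) − ∑_{i=ℓ'+1}^{s} λᵢ)/σ² → (ℓ')²/ℓ. -/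
theorem stmt_12 {n l s : ℕ} (hl : 1 ≤ l) (hln : l ≤ n) (hs : s ≤ n)
    (U : Matrix (Fin n) (Fin n) ℝ) (hU : Uᵀ * U = 1)
    (lam : Fin n → ℝ)
    (hmono : ∀ i j : Fin n, i ≤ j → lam j ≤ lam i)
    (hpos : ∀ i : Fin n, (i : ℕ) < s → 0 < lam i)
    (hzero : ∀ i : Fin n, s ≤ (i : ℕ) → lam i = 0)
    (Sx : Matrix (Fin n) (Fin n) ℝ) (hSx : Sx = U * Matrix.diagonal lam * Uᵀ)
    (d : Fin l → ℝ)
    (hd : ∀ i : Fin l, d i = if (i : ℕ) < min l s then (l : ℝ) / (min l s : ℝ) else 0)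
    (Φ : Matrix (Fin l) (Fin n) ℝ)
    (hΦ : Φ = (Matrix.of fun (i : Fin l) (j : Fin n) =>
        if (j : ℕ) = (i : ℕ) then Real.sqrt (d i) else 0) * Uᵀ) :
    Tendsto (fun σ2 : ℝ =>
        ((Sx - Sx * Φᵀ * (σ2 • (1 : Matrix (Fin l) (Fin l) ℝ) + Φ * Sx * Φᵀ)⁻¹ * Φ * Sx).trace
          - ∑ i ∈ Finset.univ.filter (fun i : Fin n => min l s ≤ (i : ℕ) ∧ (i : ℕ) < s), lam i)
          / σ2)
      (nhdsWithin 0 (Set.Ioi 0)) (nhds ((min l s : ℝ) ^ 2 / (l : ℝ))) := by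
  have hUU : U * Uᵀ = 1 := mul_eq_one_comm.mp hU
  set k := min l s with hk
  have hkR : ((k:ℕ):ℝ) = (l:ℝ) ⊓ (s:ℝ) := by rw [hk]; push_cast; rfl
  rw [← hkR] at hd ⊢
  have hkl : k ≤ l := min_le_left _ _
  have hks : k ≤ s := min_le_right _ _
  have hkn : k ≤ n := hkl.trans hln
  have hlpos : (0:ℝ) < l := by exact_mod_cast hl
  have hlam0 : ∀ j : Fin n, 0 ≤ lam j := by
    intro j
    rcases lt_or_ge (j:ℕ) s with h | h
    · exact (hpos j h).le
    · exact le_of_eq (hzero j h).symm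
  set c : ℝ := (l : ℝ) / (k : ℝ) with hc
  have hd' : ∀ i : Fin l, d i = if (i : ℕ) < k then c else 0 := hd
  have hd0 : ∀ i : Fin l, 0 ≤ d i := by
    intro i; rw [hd']
    split
    · exact div_nonneg hlpos.le (Nat.cast_nonneg _)
    · exact le_refl _
  set emb : Fin l → Fin n := Fin.castLE hln with hemb
  set D : Matrix (Fin l) (Fin n) ℝ := Matrix.of fun (i : Fin l) (j : Fin n) =>
        if (j : ℕ) = (i : ℕ) then Real.sqrt (d i) else 0 with hDdef
  have hDapp : ∀ (i : Fin l) (j : Fin n), D i j = if j = emb i then Real.sqrt (d i) else 0 := by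
    intro i j
    have : ((j:ℕ) = (i:ℕ)) = (j = emb i) := by
      simp [hemb, Fin.ext_iff]
    simp only [hDdef, Matrix.of_apply, this]
  set P : Finset (Fin n) := Finset.univ.filter (fun j : Fin n => (j:ℕ) < k) with hP
  set T : Finset (Fin n) := Finset.univ.filter (fun i : Fin n => k ≤ (i : ℕ) ∧ (i : ℕ) < s) with hT
  have hcardP : P.card = k := by
    have : P = Finset.map (Fin.castLEEmb hkn) Finset.univ := by
      ext j
      simp only [hP, Finset.mem_filter, Finset.mem_univ, true_and, Finset.mem_map, Fin.castLEEmb,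
        Function.Embedding.coeFn_mk]
      constructor
      · intro hj; exact ⟨⟨j, hj⟩, by ext; simp⟩
      · rintro ⟨a, rfl⟩; simpa using a.isLt
    rw [this, Finset.card_map, Finset.card_univ, Fintype.card_fin]
  -- main pointwise identity
  have main : ∀ σ2 : ℝ, 0 < σ2 →
      ((Sx - Sx * Φᵀ * (σ2 • (1 : Matrix (Fin l) (Fin l) ℝ) + Φ * Sx * Φᵀ)⁻¹ * Φ * Sx).trace
          - ∑ i ∈ T, lam i) / σ2
      = ∑ j ∈ P, lam j * (σ2 + c * lam j)⁻¹ := by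
    intro σ2 hσ2
    have cancelU : ∀ {m : Type} (X : Matrix (Fin n) m ℝ), Uᵀ * (U * X) = X := by
      intro m X; rw [← Matrix.mul_assoc, hU, Matrix.one_mul]
    have hembinj : Function.Injective emb := Fin.castLE_injective hln
    set ν : Fin l → ℝ := fun i => (σ2 + d i * lam (emb i))⁻¹ with hν
    have hpos' : ∀ i : Fin l, 0 < σ2 + d i * lam (emb i) := fun i =>
      add_pos_of_pos_of_nonneg hσ2 (mul_nonneg (hd0 i) (hlam0 _))
    -- A : D * diagonal lam * Dᵀ
    have hA : D * Matrix.diagonal lam * Dᵀ = Matrix.diagonal (fun i : Fin l => d i * lam (emb i)) := by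
      ext i i'
      have : (D * Matrix.diagonal lam * Dᵀ) i i' = ∑ x : Fin n, D i x * lam x * D i' x := by
        rw [Matrix.mul_apply]
        apply Finset.sum_congr rfl
        intro x _
        rw [Matrix.mul_diagonal, Matrix.transpose_apply]
      rw [this]
      by_cases h : i = i'
      · subst h
        rw [Matrix.diagonal_apply_eq]
        have : ∀ x : Fin n, D i x * lam x * D i x
            = if x = emb i then Real.sqrt (d i) * lam x * Real.sqrt (d i) else 0 := by
          intro x; rw [hDapp]; split_ifs <;> simp
        rw [Finset.sum_congr rfl (fun x _ => this x), Finset.sum_ite_eq']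
        simp only [Finset.mem_univ, if_true]
        rw [mul_comm (Real.sqrt (d i)) (lam (emb i)), mul_assoc, Real.mul_self_sqrt (hd0 i)]
        ring
      · rw [Matrix.diagonal_apply_ne _ h]
        apply Finset.sum_eq_zero
        intro x _
        rw [hDapp, hDapp]
        split_ifs with h1 h2
        · exact absurd (hembinj (h1 ▸ h2)) h
        · ring
        · ring
        · ring
    -- Φ Sx Φᵀ is diagonal
    have hΦSxΦT : Φ * Sx * Φᵀ = Matrix.diagonal (fun i : Fin l => d i * lam (emb i)) := by
      rw [hΦ, hSx]
      simp only [Matrix.transpose_mul, Matrix.transpose_transpose, Matrix.mul_assoc, cancelU]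
      rw [← Matrix.mul_assoc, hA]
    -- inverse of M
    have hMinv : (σ2 • (1 : Matrix (Fin l) (Fin l) ℝ) + Φ * Sx * Φᵀ)⁻¹ = Matrix.diagonal ν := by
      apply Matrix.inv_eq_right_inv
      rw [hΦSxΦT, Matrix.smul_one_eq_diagonal, Matrix.diagonal_add, Matrix.diagonal_mul_diagonal,
        ← Matrix.diagonal_one]
      have : (fun i => (σ2 + d i * lam (emb i)) * ν i) = fun _ => (1:ℝ) :=
        funext fun i => mul_inv_cancel₀ (hpos' i).ne'
      rw [this]
    -- g
    set g : Fin n → ℝ := fun j => ∑ i : Fin l, if j = emb i then d i * ν i else 0 with hg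
    have hB : Dᵀ * Matrix.diagonal ν * D = Matrix.diagonal g := by
      ext j j'
      have : (Dᵀ * Matrix.diagonal ν * D) j j' = ∑ i : Fin l, D i j * ν i * D i j' := by
        rw [Matrix.mul_apply]
        apply Finset.sum_congr rfl
        intro i _
        rw [Matrix.mul_diagonal, Matrix.transpose_apply]
      rw [this]
      by_cases h : j = j'
      · subst h
        rw [Matrix.diagonal_apply_eq]
        apply Finset.sum_congr rfl
        intro i _
        rw [hDapp]
        split_ifs with h1
        · subst h1
          rw [mul_comm (Real.sqrt (d i)) (ν i), mul_assoc, Real.mul_self_sqrt (hd0 i)]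
          ring
        · ring
      · rw [Matrix.diagonal_apply_ne _ h]
        apply Finset.sum_eq_zero
        intro i _
        rw [hDapp, hDapp]
        split_ifs with h1 h2
        · exact absurd (h1.trans h2.symm) h
        · ring
        · ring
        · ring
    -- the big product
    have inner : Matrix.diagonal lam * Dᵀ * Matrix.diagonal ν * D * Matrix.diagonal lam
        = Matrix.diagonal (fun j => lam j * g j * lam j) := by
      calc Matrix.diagonal lam * Dᵀ * Matrix.diagonal ν * D * Matrix.diagonal lam
          = Matrix.diagonal lam * (Dᵀ * Matrix.diagonal ν * D) * Matrix.diagonal lam := by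
            simp only [Matrix.mul_assoc]
        _ = Matrix.diagonal lam * Matrix.diagonal g * Matrix.diagonal lam := by rw [hB]
        _ = Matrix.diagonal (fun j => lam j * g j * lam j) := by
            rw [Matrix.diagonal_mul_diagonal, Matrix.diagonal_mul_diagonal]
    have hbig : Sx * Φᵀ * (σ2 • (1 : Matrix (Fin l) (Fin l) ℝ) + Φ * Sx * Φᵀ)⁻¹ * Φ * Sx
        = U * Matrix.diagonal (fun j => lam j * g j * lam j) * Uᵀ := by
      rw [hMinv, hSx, hΦ, ← inner]
      simp only [Matrix.transpose_mul, Matrix.transpose_transpose, Matrix.mul_assoc, cancelU]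
    have htr : ∀ e : Fin n → ℝ, (U * Matrix.diagonal e * Uᵀ).trace = ∑ j, e j := by
      intro e
      rw [Matrix.trace_mul_cycle, hU, Matrix.one_mul, Matrix.trace_diagonal]
    have htrace : (Sx - Sx * Φᵀ * (σ2 • (1 : Matrix (Fin l) (Fin l) ℝ) + Φ * Sx * Φᵀ)⁻¹ * Φ * Sx).trace
        = ∑ j, (lam j - lam j * g j * lam j) := by
      rw [Matrix.trace_sub, hbig, hSx, htr, htr, ← Finset.sum_sub_distrib]
    rw [htrace]
    -- scalar computation
    have hgP : ∀ (j : Fin n) (hjk : (j:ℕ) < k),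
        g j = c * (σ2 + c * lam j)⁻¹ := by
      intro j hjk
      have hjl : (j:ℕ) < l := lt_of_lt_of_le hjk hkl
      set i₀ : Fin l := ⟨(j:ℕ), hjl⟩ with hi₀
      have hembi₀ : emb i₀ = j := by ext; simp [hemb, hi₀]
      have hdi₀ : d i₀ = c := by rw [hd']; simp [hi₀, hjk]
      have hiff : ∀ i : Fin l, (j = emb i) ↔ (i = i₀) := by
        intro i
        constructor
        · intro h; ext; have := congrArg Fin.val h; simpa [hemb] using this.symm
        · rintro rfl; exact hembi₀.symm
      rw [hg]
      simp only []
      rw [Finset.sum_congr rfl (fun i _ => if_congr (hiff i) rfl rfl), Finset.sum_ite_eq']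
      simp only [Finset.mem_univ, if_true, hν]
      rw [hdi₀, hembi₀]
    have hgL : ∀ j : Fin n, l ≤ (j:ℕ) → g j = 0 := by
      intro j hj
      rw [hg]
      apply Finset.sum_eq_zero
      intro i _
      have : j ≠ emb i := by
        intro h
        have := congrArg Fin.val h
        simp [hemb] at this
        omega
      rw [if_neg this]
    have hsplit := Finset.sum_filter_add_sum_filter_not Finset.univ
      (fun j : Fin n => (j:ℕ) < k) (fun j => lam j - lam j * g j * lam j)
    have hTsum : ∑ j ∈ Finset.univ.filter (fun j : Fin n => ¬ (j:ℕ) < k),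
        (lam j - lam j * g j * lam j) = ∑ i ∈ T, lam i := by
      have step1 : ∀ j ∈ Finset.univ.filter (fun j : Fin n => ¬ (j:ℕ) < k),
          lam j - lam j * g j * lam j = if (j:ℕ) < s then lam j else 0 := by
        intro j hj
        have hjk : k ≤ (j:ℕ) := by simpa using (Finset.mem_filter.mp hj).2
        by_cases hjs : (j:ℕ) < s
        · have hkl' : k = l := by omega
          have : l ≤ (j:ℕ) := by omega
          rw [if_pos hjs, hgL j this]; ring
        · rw [if_neg hjs, hzero j (le_of_not_gt hjs)]; ring
      rw [Finset.sum_congr rfl step1, ← Finset.sum_filter, Finset.filter_filter, hT]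
      apply Finset.sum_congr _ (fun _ _ => rfl)
      apply Finset.filter_congr
      intro j _
      simp [not_lt]
    rw [← hsplit, ← hTsum]
    rw [add_sub_cancel_right, Finset.sum_div]
    apply Finset.sum_congr rfl
    intro j hj
    have hjk : (j:ℕ) < k := by simpa [hP] using hj
    have hkpos : (0:ℕ) < k := Nat.pos_of_ne_zero (by omega)
    have hcp : 0 < c := div_pos hlpos (by exact_mod_cast hkpos)
    have hlj : 0 < lam j := hpos j (lt_of_lt_of_le hjk hks)
    rw [hgP j hjk]
    have hden : (0:ℝ) < σ2 + c * lam j := by positivity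
    field_simp
    ring
  -- limit of RHS
  have hlim : Tendsto (fun σ2 : ℝ => ∑ j ∈ P, lam j * (σ2 + c * lam j)⁻¹)
      (nhdsWithin 0 (Set.Ioi 0)) (nhds ((k : ℝ) ^ 2 / (l : ℝ))) := by
    have key : ∀ j ∈ P, lam j * ((0:ℝ) + c * lam j)⁻¹ = (k:ℝ) / (l:ℝ) := by
      intro j hj
      have hjk : (j:ℕ) < k := by simpa [hP] using hj
      have hkpos : (0:ℕ) < k := Nat.pos_of_ne_zero (by omega)
      have hlj : 0 < lam j := hpos j (lt_of_lt_of_le hjk hks)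
      have hkRpos : (0:ℝ) < (k:ℝ) := by exact_mod_cast hkpos
      rw [hc]
      field_simp
      ring
    have h1 : Tendsto (fun σ2 : ℝ => ∑ j ∈ P, lam j * (σ2 + c * lam j)⁻¹)
        (nhdsWithin 0 (Set.Ioi 0)) (nhds (∑ j ∈ P, lam j * ((0:ℝ) + c * lam j)⁻¹)) := by
      apply Tendsto.mono_left _ nhdsWithin_le_nhds
      apply tendsto_finset_sum
      intro j hj
      have hjk : (j:ℕ) < k := by simpa [hP] using hj
      have hkpos : (0:ℕ) < k := Nat.pos_of_ne_zero (by omega)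
      have hlj : 0 < lam j := hpos j (lt_of_lt_of_le hjk hks)
      have hcp : 0 < c := div_pos hlpos (by exact_mod_cast hkpos)
      have hne : (0:ℝ) + c * lam j ≠ 0 := by positivity
      exact (tendsto_const_nhds.mul ((tendsto_id.add tendsto_const_nhds).inv₀ hne))
    rw [Finset.sum_congr rfl key] at h1
    rw [Finset.sum_const, hcardP, nsmul_eq_mul] at h1
    have : (k:ℝ) * ((k:ℝ)/(l:ℝ)) = (k:ℝ)^2/(l:ℝ) := by ring
    rwa [this] at h1
  refine hlim.congr' ?_
  filter_upwards [self_mem_nhdsWithin] with σ2 hσ2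
  exact (main σ2 hσ2).symm
end

section
/- Let n ≥ ℓ ≥ 1, let σ² > 0, let U be a real n×n orthogonal matrix, let λ₁ ≥ λ₂ ≥ … ≥ λ_s > 0 and λᵢ = 0 for i > s, and set Σ_x = U·diag(λ₁,…,λ_n)·Uᵀ. Suppose η > 0 satisfies Σ_{i=1}^{min(ℓ,s)} max(η − σ²/λᵢ, 0) = ℓ, and define dᵢ = max(η − σ²/λᵢ, 0) for i ≤ min(ℓ,s) and dᵢ = 0 for min(ℓ,s) < i ≤ ℓ. Let Φ* = [diag(√d₁,…,√d_ℓ) 0_{ℓ×(n−ℓ)}]·Uᵀ. Then for every real ℓ×n matrix Φ with tr(Φ·Φᵀ) ≤ ℓ, MMSE(σ², Φ*) ≤ MMSE(σ², Φ); that is, the water-filling kernel Φ* minimizes the Gaussian MMSE subject to the trace constraint. -/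
open Matrix Finset

noncomputable def dd (σ2 η x : ℝ) : ℝ := if x * η ≤ σ2 then 0 else η - σ2 / x

noncomputable def gg (σ2 η x : ℝ) : ℝ :=
  if x * η ≤ σ2 then x else 2 * σ2 / η - σ2 ^ 2 / (η ^ 2 * x)

noncomputable def hh (σ2 η x : ℝ) : ℝ := x - gg σ2 η x

section scalar

lemma dd_pos_x {σ2 η x : ℝ} (hσ2 : 0 < σ2) (hη : 0 < η) (h : ¬ x * η ≤ σ2) : 0 < x := by
  by_contra hx
  push_neg at hx
  nlinarith

lemma dd_nonneg {σ2 η x : ℝ} (hσ2 : 0 < σ2) (hη : 0 < η) : 0 ≤ dd σ2 η x := by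
  unfold dd
  split_ifs with h
  · exact le_rfl
  · have hx : 0 < x := dd_pos_x hσ2 hη h
    rw [sub_nonneg, div_le_iff₀ hx]
    nlinarith

lemma dd_eq_max {σ2 η x : ℝ} (hσ2 : 0 < σ2) (hη : 0 < η) (hx : 0 < x) :
    dd σ2 η x = max (η - σ2 / x) 0 := by
  unfold dd
  split_ifs with h
  · rw [max_eq_right]
    rw [sub_nonpos, le_div_iff₀ hx]
    linarith
  · rw [max_eq_left]
    have := dd_nonneg (σ2 := σ2) (η := η) (x := x) hσ2 hη
    unfold dd at this
    rwa [if_neg h] at this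

lemma gg_eq {σ2 η x : ℝ} (hσ2 : 0 < σ2) (hη : 0 < η) :
    gg σ2 η x = σ2 * x / (σ2 + x * dd σ2 η x) + σ2 / η ^ 2 * dd σ2 η x := by
  have hσ2' : σ2 ≠ 0 := hσ2.ne'
  have hη' : η ≠ 0 := hη.ne'
  unfold gg dd
  split_ifs with h
  · rw [mul_zero, mul_zero, add_zero, add_zero, mul_comm, mul_div_assoc, div_self hσ2', mul_one]
  · have hx0 : 0 < x := dd_pos_x hσ2 hη h
    have hx0' : x ≠ 0 := hx0.ne'
    have h1 : σ2 + x * (η - σ2 / x) = x * η := by field_simp; ring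
    rw [h1]
    field_simp
    ring

lemma gg_le_tangent {σ2 η x γ : ℝ} (hσ2 : 0 < σ2) (hη : 0 < η) (hx : 0 ≤ x) (hγ : 0 ≤ γ) :
    gg σ2 η x ≤ σ2 * x / (σ2 + x * γ) + σ2 / η ^ 2 * γ := by
  have hσ2' : σ2 ≠ 0 := hσ2.ne'
  have hη' : η ≠ 0 := hη.ne'
  have hden : 0 < σ2 + x * γ := by nlinarith [mul_nonneg hx hγ]
  have hη2 : 0 < η ^ 2 := by positivity
  rw [← sub_nonneg]
  unfold gg
  split_ifs with h
  · have heq : σ2 * x / (σ2 + x * γ) + σ2 / η ^ 2 * γ - x =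
        γ * ((σ2 - x * η) * (σ2 + x * η) + σ2 * x * γ) / (η ^ 2 * (σ2 + x * γ)) := by
      field_simp
      ring
    rw [heq]
    apply div_nonneg _ (by positivity)
    apply mul_nonneg hγ
    have h2 : 0 ≤ σ2 - x * η := by linarith
    have h3 : 0 ≤ σ2 + x * η := by nlinarith [mul_nonneg hx hη.le]
    nlinarith [mul_nonneg hx hγ]
  · have hx0 : 0 < x := dd_pos_x hσ2 hη h
    have hx0' : x ≠ 0 := hx0.ne'
    have heq : σ2 * x / (σ2 + x * γ) + σ2 / η ^ 2 * γ - (2 * σ2 / η - σ2 ^ 2 / (η ^ 2 * x)) =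
        σ2 * (η * x - σ2 - x * γ) ^ 2 / (η ^ 2 * x * (σ2 + x * γ)) := by
      field_simp
      ring
    rw [heq]
    apply div_nonneg (mul_nonneg hσ2.le (sq_nonneg _))
    positivity

lemma psi_tangent {σ2 x z γ : ℝ} (hσ2 : 0 < σ2) (hx : 0 ≤ x) (hz : 0 ≤ z) (hγ : 0 ≤ γ) :
    σ2 * x / (σ2 + x * γ) ≤ σ2 * z / (σ2 + z * γ) + σ2 ^ 2 / (σ2 + z * γ) ^ 2 * (x - z) := by
  have hdx : 0 < σ2 + x * γ := by nlinarith [mul_nonneg hx hγ]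
  have hdz : 0 < σ2 + z * γ := by nlinarith [mul_nonneg hz hγ]
  rw [← sub_nonneg]
  have heq : σ2 * z / (σ2 + z * γ) + σ2 ^ 2 / (σ2 + z * γ) ^ 2 * (x - z) - σ2 * x / (σ2 + x * γ)
      = σ2 ^ 2 * γ * (x - z) ^ 2 / ((σ2 + z * γ) ^ 2 * (σ2 + x * γ)) := by
    field_simp
    ring
  rw [heq]
  apply div_nonneg _ (by positivity)
  exact mul_nonneg (mul_nonneg (sq_nonneg _) hγ) (sq_nonneg _)

lemma hh_nonneg {σ2 η x : ℝ} (hσ2 : 0 < σ2) (hη : 0 < η) (hx : 0 ≤ x) : 0 ≤ hh σ2 η x := by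
  have hη' : η ≠ 0 := hη.ne'
  unfold hh gg
  split_ifs with h
  · simp
  · have hx0 : 0 < x := dd_pos_x hσ2 hη h
    have hx0' : x ≠ 0 := hx0.ne'
    have heq : x - (2 * σ2 / η - σ2 ^ 2 / (η ^ 2 * x)) = (η * x - σ2) ^ 2 / (η ^ 2 * x) := by
      field_simp
      ring
    rw [heq]
    positivity

lemma hh_mono {σ2 η x y : ℝ} (hσ2 : 0 < σ2) (hη : 0 < η) (hx : 0 ≤ x) (hxy : x ≤ y) :
    hh σ2 η x ≤ hh σ2 η y := by
  have hη' : η ≠ 0 := hη.ne'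
  have hy : 0 ≤ y := le_trans hx hxy
  unfold hh gg
  split_ifs with h1 h2 h2
  · simp
  · have := hh_nonneg (σ2 := σ2) (η := η) hσ2 hη hy
    unfold hh gg at this
    rw [if_neg h2] at this
    linarith
  · exfalso
    apply h1
    calc x * η ≤ y * η := mul_le_mul_of_nonneg_right hxy hη.le
    _ ≤ σ2 := h2
  · have hx0 : 0 < x := dd_pos_x hσ2 hη h1
    have hy0 : 0 < y := dd_pos_x hσ2 hη h2
    have hx0' : x ≠ 0 := hx0.ne'
    have hy0' : y ≠ 0 := hy0.ne'
    have heq : (y - (2 * σ2 / η - σ2 ^ 2 / (η ^ 2 * y))) - (x - (2 * σ2 / η - σ2 ^ 2 / (η ^ 2 * x)))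
        = (y - x) * (η ^ 2 * (x * y) - σ2 ^ 2) / (η ^ 2 * (x * y)) := by
      field_simp
      ring
    rw [← sub_nonneg, heq]
    apply div_nonneg _ (by positivity)
    apply mul_nonneg (by linarith)
    push_neg at h1 h2
    nlinarith

end scalar

lemma card_filter_lt_fin {N m : ℕ} (hm : m ≤ N) :
    (Finset.univ.filter (fun i : Fin N => (i : ℕ) < m)).card = m := by
  rw [← Finset.card_range m]
  apply Finset.card_bij (fun (a : Fin N) _ => (a : ℕ))
  · intro a ha
    simp only [Finset.mem_filter] at ha
    simpa using ha.2
  · intro a _ b _ h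
    exact Fin.ext h
  · intro b hb
    simp only [Finset.mem_range] at hb
    exact ⟨⟨b, lt_of_lt_of_le hb hm⟩, by simpa using hb, rfl⟩

lemma thresh {N : ℕ} (w φl : Fin N → ℝ) (hw0 : ∀ i, 0 ≤ w i) (hw1 : ∀ i, w i ≤ 1)
    (hmono : ∀ i j : Fin N, i ≤ j → φl j ≤ φl i) (hφ0 : ∀ i, 0 ≤ φl i)
    (m : ℕ) (hm : ∑ i, w i ≤ (m : ℝ)) :
    ∑ i, w i * φl i ≤ ∑ i ∈ Finset.univ.filter (fun i : Fin N => (i : ℕ) < m), φl i := by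
  by_cases hNm : N ≤ m
  · have hfilt : Finset.univ.filter (fun i : Fin N => (i : ℕ) < m) = Finset.univ := by
      apply Finset.filter_true_of_mem
      intro i _
      exact lt_of_lt_of_le i.isLt hNm
    rw [hfilt]
    apply Finset.sum_le_sum
    intro i _
    nlinarith [hw0 i, hw1 i, hφ0 i]
  · push_neg at hNm
    set i0 : Fin N := ⟨m, hNm⟩ with hi0
    set t := φl i0 with ht
    have ht0 : 0 ≤ t := hφ0 i0
    have key : ∀ i : Fin N, w i * φl i ≤
        (if (i : ℕ) < m then φl i + (w i - 1) * t else w i * t) := by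
      intro i
      split_ifs with h
      · have h1 : t ≤ φl i := hmono i i0 (by rw [Fin.le_def]; exact le_of_lt h)
        nlinarith [hw1 i]
      · have h1 : φl i ≤ t := hmono i0 i (by rw [Fin.le_def]; exact le_of_not_gt h)
        nlinarith [hw0 i]
    have hcard := card_filter_lt_fin (N := N) (m := m) (le_of_lt hNm)
    calc ∑ i, w i * φl i ≤ ∑ i : Fin N, (if (i : ℕ) < m then φl i + (w i - 1) * t else w i * t) :=
          Finset.sum_le_sum (fun i _ => key i)
    _ = ∑ i ∈ Finset.univ.filter (fun i : Fin N => (i : ℕ) < m), (φl i + (w i - 1) * t)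
        + ∑ i ∈ Finset.univ.filter (fun i : Fin N => ¬ (i : ℕ) < m), w i * t := by
      rw [Finset.sum_ite]
    _ = ∑ i ∈ Finset.univ.filter (fun i : Fin N => (i : ℕ) < m), φl i
        + ((∑ i ∈ Finset.univ.filter (fun i : Fin N => (i : ℕ) < m), w i
            + ∑ i ∈ Finset.univ.filter (fun i : Fin N => ¬ (i : ℕ) < m), w i) - m) * t := by
      rw [Finset.sum_add_distrib, ← Finset.sum_mul, ← Finset.sum_mul, Finset.sum_sub_distrib]
      simp only [Finset.sum_const, hcard, nsmul_eq_mul, mul_one]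
      ring
    _ ≤ _ := by
      rw [Finset.sum_filter_add_sum_filter_not]
      nlinarith

lemma core {n : ℕ} {σ2 η : ℝ} (hσ2 : 0 < σ2) (hη : 0 < η)
    (m s : ℕ) (hmle : m ≤ s) (L : ℝ)
    (lam : Fin n → ℝ)
    (hmono : ∀ i j : Fin n, i ≤ j → lam j ≤ lam i)
    (hpos : ∀ i : Fin n, (i : ℕ) < s → 0 < lam i)
    (hzero : ∀ i : Fin n, s ≤ (i : ℕ) → lam i = 0)
    (β : Fin n → ℝ) (hβ : ∀ j, 0 ≤ β j)
    (T : Fin n → Fin n → ℝ)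
    (hT0 : ∀ j i, 0 ≤ T j i)
    (hTrow : ∀ j, ∑ i, T j i = 1)
    (hTcol : ∀ i, ∑ j, T j i = 1)
    (hsupp : ∀ j, β j ≠ 0 → ∀ i : Fin n, s ≤ (i : ℕ) → T j i = 0)
    (hcard : (Finset.univ.filter (fun j : Fin n => β j ≠ 0)).card ≤ m)
    (hbudget : ∑ j, β j * (∑ i ∈ Finset.univ.filter (fun i : Fin n => (i : ℕ) < s),
        T j i / lam i) ≤ L) :
    ∑ i ∈ Finset.univ.filter (fun i : Fin n => (i : ℕ) < m), gg σ2 η (lam i)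
      + ∑ i ∈ Finset.univ.filter (fun i : Fin n => ¬ (i : ℕ) < m), lam i
      - σ2 / η ^ 2 * L
    ≤ ∑ j, σ2 * (∑ i, T j i * lam i) / (σ2 + β j) := by
  classical
  have hlam0 : ∀ i : Fin n, 0 ≤ lam i := by
    intro i
    by_cases h : (i : ℕ) < s
    · exact (hpos i h).le
    · rw [hzero i (le_of_not_gt h)]
  set J : Finset (Fin n) := Finset.univ.filter (fun j : Fin n => β j ≠ 0) with hJ
  set filtS : Finset (Fin n) := Finset.univ.filter (fun i : Fin n => (i : ℕ) < s) with hfS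
  set lamt : Fin n → ℝ := fun j => ∑ i, T j i * lam i with hlamt
  set cc : Fin n → ℝ := fun j => ∑ i ∈ filtS, T j i / lam i with hcc
  have hlamt0 : ∀ j, 0 ≤ lamt j :=
    fun j => Finset.sum_nonneg fun i _ => mul_nonneg (hT0 j i) (hlam0 i)
  have hcc0 : ∀ j, 0 ≤ cc j := by
    intro j
    apply Finset.sum_nonneg
    intro i hi
    rw [hfS, Finset.mem_filter] at hi
    exact div_nonneg (hT0 j i) (hpos i hi.2).le
  -- for j ∈ J : 1 ≤ lamt j * cc j
  have hCS : ∀ j ∈ J, 1 ≤ lamt j * cc j := by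
    intro j hj
    rw [hJ, Finset.mem_filter] at hj
    have hrow_s : ∑ i ∈ filtS, T j i = 1 := by
      have := hTrow j
      rw [← Finset.sum_filter_add_sum_filter_not Finset.univ
        (fun i : Fin n => (i : ℕ) < s) (fun i => T j i)] at this
      have h2 : ∑ i ∈ Finset.univ.filter (fun i : Fin n => ¬ (i : ℕ) < s), T j i = 0 := by
        apply Finset.sum_eq_zero
        intro i hi
        rw [Finset.mem_filter] at hi
        exact hsupp j hj.2 i (le_of_not_gt hi.2)
      rw [h2, add_zero] at this
      exact this
    have hlamt_eq : lamt j = ∑ i ∈ filtS, T j i * lam i := by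
      rw [hlamt]
      dsimp only
      rw [← Finset.sum_filter_add_sum_filter_not Finset.univ
        (fun i : Fin n => (i : ℕ) < s) (fun i => T j i * lam i)]
      have h2 : ∑ i ∈ Finset.univ.filter (fun i : Fin n => ¬ (i : ℕ) < s), T j i * lam i = 0 := by
        apply Finset.sum_eq_zero
        intro i hi
        rw [Finset.mem_filter] at hi
        rw [hzero i (le_of_not_gt hi.2), mul_zero]
      rw [h2, add_zero]
    have key : (∑ i ∈ filtS, T j i) ^ 2 ≤ (∑ i ∈ filtS, T j i * lam i) * (∑ i ∈ filtS, T j i / lam i) := by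
      have hCS2 := Finset.sum_mul_sq_le_sq_mul_sq filtS
        (fun i => Real.sqrt (T j i * lam i)) (fun i => Real.sqrt (T j i / lam i))
      have e1 : ∀ i ∈ filtS, Real.sqrt (T j i * lam i) * Real.sqrt (T j i / lam i) = T j i := by
        intro i hi
        rw [hfS, Finset.mem_filter] at hi
        have hli : 0 < lam i := hpos i hi.2
        rw [← Real.sqrt_mul (mul_nonneg (hT0 j i) hli.le)]
        have : T j i * lam i * (T j i / lam i) = (T j i) ^ 2 := by
          field_simp
        rw [this, Real.sqrt_sq (hT0 j i)]
      have e2 : ∀ i ∈ filtS, Real.sqrt (T j i * lam i) ^ 2 = T j i * lam i := by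
        intro i hi
        rw [hfS, Finset.mem_filter] at hi
        exact Real.sq_sqrt (mul_nonneg (hT0 j i) (hpos i hi.2).le)
      have e3 : ∀ i ∈ filtS, Real.sqrt (T j i / lam i) ^ 2 = T j i / lam i := by
        intro i hi
        rw [hfS, Finset.mem_filter] at hi
        exact Real.sq_sqrt (div_nonneg (hT0 j i) (hpos i hi.2).le)
      rw [Finset.sum_congr rfl e1, Finset.sum_congr rfl e2, Finset.sum_congr rfl e3] at hCS2
      exact hCS2
    rw [hrow_s] at key
    rw [← hlamt_eq] at key
    rw [hcc]
    simpa using key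
  have hlamt_pos : ∀ j ∈ J, 0 < lamt j := by
    intro j hj
    have h1 := hCS j hj
    by_contra h
    push_neg at h
    nlinarith [hcc0 j]
  set γ : Fin n → ℝ := fun j => β j / lamt j with hγ
  have hγ0 : ∀ j, 0 ≤ γ j := fun j => div_nonneg (hβ j) (hlamt0 j)
  -- per-j bound for j ∈ J
  have hperj : ∀ j ∈ J,
      ∑ i, T j i * gg σ2 η (lam i) - σ2 / η ^ 2 * γ j ≤ σ2 * lamt j / (σ2 + β j) := by
    intro j hj
    have hlp := hlamt_pos j hj
    set γ0 : ℝ := dd σ2 η (lamt j) with hγ0def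
    have hγ0n : 0 ≤ γ0 := dd_nonneg hσ2 hη
    have step1 : ∑ i, T j i * gg σ2 η (lam i) ≤
        ∑ i, T j i * (σ2 * lam i / (σ2 + lam i * γ0) + σ2 / η ^ 2 * γ0) := by
      apply Finset.sum_le_sum
      intro i _
      exact mul_le_mul_of_nonneg_left (gg_le_tangent hσ2 hη (hlam0 i) hγ0n) (hT0 j i)
    have step2 : ∑ i, T j i * (σ2 * lam i / (σ2 + lam i * γ0) + σ2 / η ^ 2 * γ0) ≤
        ∑ i, T j i * ((σ2 * lamt j / (σ2 + lamt j * γ0)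
          + σ2 ^ 2 / (σ2 + lamt j * γ0) ^ 2 * (lam i - lamt j)) + σ2 / η ^ 2 * γ0) := by
      apply Finset.sum_le_sum
      intro i _
      apply mul_le_mul_of_nonneg_left _ (hT0 j i)
      refine add_le_add ?_ le_rfl
      exact psi_tangent hσ2 (hlam0 i) (hlamt0 j) hγ0n
    have step3 : ∑ i, T j i * ((σ2 * lamt j / (σ2 + lamt j * γ0)
          + σ2 ^ 2 / (σ2 + lamt j * γ0) ^ 2 * (lam i - lamt j)) + σ2 / η ^ 2 * γ0)
        = gg σ2 η (lamt j) := by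
      have expand : ∀ i, T j i * ((σ2 * lamt j / (σ2 + lamt j * γ0)
          + σ2 ^ 2 / (σ2 + lamt j * γ0) ^ 2 * (lam i - lamt j)) + σ2 / η ^ 2 * γ0)
          = T j i * (σ2 * lamt j / (σ2 + lamt j * γ0) + σ2 / η ^ 2 * γ0)
            + σ2 ^ 2 / (σ2 + lamt j * γ0) ^ 2 * (T j i * lam i)
            - σ2 ^ 2 / (σ2 + lamt j * γ0) ^ 2 * (T j i * lamt j) := by
        intro i
        ring
      rw [Finset.sum_congr rfl (fun i _ => expand i)]
      rw [Finset.sum_sub_distrib, Finset.sum_add_distrib]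
      rw [← Finset.sum_mul, ← Finset.mul_sum, ← Finset.mul_sum, hTrow j]
      have : ∑ i, T j i * lamt j = lamt j := by
        rw [← Finset.sum_mul, hTrow j, one_mul]
      rw [this]
      rw [gg_eq hσ2 hη]
      rw [← hγ0def]
      have hl : ∑ i, T j i * lam i = lamt j := rfl
      rw [hl]
      ring_nf
    have step4 : gg σ2 η (lamt j) ≤ σ2 * lamt j / (σ2 + lamt j * γ j) + σ2 / η ^ 2 * γ j :=
      gg_le_tangent hσ2 hη (hlamt0 j) (hγ0 j)
    have step5 : lamt j * γ j = β j := by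
      rw [hγ]
      field_simp
    calc ∑ i, T j i * gg σ2 η (lam i) - σ2 / η ^ 2 * γ j
        ≤ gg σ2 η (lamt j) - σ2 / η ^ 2 * γ j := by
          have := step1.trans (step2.trans_eq step3)
          linarith
    _ ≤ σ2 * lamt j / (σ2 + lamt j * γ j) := by linarith
    _ = σ2 * lamt j / (σ2 + β j) := by rw [step5]
  -- total bound
  have hmain : ∑ j ∈ J, (∑ i, T j i * gg σ2 η (lam i) - σ2 / η ^ 2 * γ j)
      + ∑ j ∈ Jᶜ, lamt j ≤ ∑ j, σ2 * lamt j / (σ2 + β j) := by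
    rw [← Finset.sum_add_sum_compl J (fun j => σ2 * lamt j / (σ2 + β j))]
    apply add_le_add
    · exact Finset.sum_le_sum hperj
    · apply Finset.sum_le_sum
      intro j hj
      have hbj : β j = 0 := by
        rw [Finset.mem_compl, hJ, Finset.mem_filter] at hj
        by_contra h
        exact hj ⟨Finset.mem_univ j, h⟩
      have he : σ2 * lamt j / (σ2 + β j) = lamt j := by
        rw [hbj, add_zero, mul_comm, mul_div_assoc, div_self hσ2.ne', mul_one]
      rw [he]
  -- budget
  have hbudget2 : ∑ j ∈ J, γ j ≤ L := by
    have h1 : ∀ j ∈ J, γ j ≤ β j * cc j := by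
      intro j hj
      have h2 := hCS j hj
      have h3 := hlamt_pos j hj
      rw [hγ]
      dsimp only
      rw [div_le_iff₀ h3]
      nlinarith [hβ j]
    calc ∑ j ∈ J, γ j ≤ ∑ j ∈ J, β j * cc j := Finset.sum_le_sum h1
    _ ≤ ∑ j, β j * cc j := by
        apply Finset.sum_le_sum_of_subset_of_nonneg (Finset.subset_univ J)
        intro j _ _
        exact mul_nonneg (hβ j) (hcc0 j)
    _ ≤ L := hbudget
  -- swap sums
  set u : Fin n → ℝ := fun i => ∑ j ∈ J, T j i with hu
  have hu0 : ∀ i, 0 ≤ u i := fun i => Finset.sum_nonneg fun j _ => hT0 j i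
  have hu1 : ∀ i, u i ≤ 1 := by
    intro i
    have := hTcol i
    rw [← Finset.sum_add_sum_compl J (fun j => T j i)] at this
    have h2 : 0 ≤ ∑ j ∈ Jᶜ, T j i := Finset.sum_nonneg fun j _ => hT0 j i
    linarith
  have husum : ∑ i, u i = (J.card : ℝ) := by
    rw [hu]
    rw [Finset.sum_comm]
    simp [hTrow]
  have hswap1 : ∑ j ∈ J, ∑ i, T j i * gg σ2 η (lam i) = ∑ i, u i * gg σ2 η (lam i) := by
    rw [Finset.sum_comm]
    congr 1
    ext i
    rw [hu, ← Finset.sum_mul]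
  have hswap2 : ∑ j ∈ Jᶜ, lamt j = ∑ i, (1 - u i) * lam i := by
    rw [hlamt]
    dsimp only
    rw [Finset.sum_comm]
    congr 1
    ext i
    rw [← Finset.sum_mul]
    have : ∑ j ∈ Jᶜ, T j i = 1 - u i := by
      have := hTcol i
      rw [← Finset.sum_add_sum_compl J (fun j => T j i)] at this
      rw [hu]
      linarith
    rw [this]
  -- threshold step
  have hthresh : ∑ i, u i * hh σ2 η (lam i) ≤
      ∑ i ∈ Finset.univ.filter (fun i : Fin n => (i : ℕ) < m), hh σ2 η (lam i) := by
    apply thresh u (fun i => hh σ2 η (lam i)) hu0 hu1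
    · intro i j hij
      exact hh_mono hσ2 hη (hlam0 j) (hmono i j hij)
    · intro i
      exact hh_nonneg hσ2 hη (hlam0 i)
    · rw [husum]
      exact_mod_cast hcard
  -- assemble
  have hassemble : ∑ i, u i * gg σ2 η (lam i) + ∑ i, (1 - u i) * lam i
      = ∑ i, lam i - ∑ i, u i * hh σ2 η (lam i) := by
    rw [← Finset.sum_add_distrib, ← Finset.sum_sub_distrib]
    congr 1
    ext i
    unfold hh
    ring
  have hsplit : ∑ i, lam i
      - ∑ i ∈ Finset.univ.filter (fun i : Fin n => (i : ℕ) < m), hh σ2 η (lam i)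
      = ∑ i ∈ Finset.univ.filter (fun i : Fin n => (i : ℕ) < m), gg σ2 η (lam i)
        + ∑ i ∈ Finset.univ.filter (fun i : Fin n => ¬ (i : ℕ) < m), lam i := by
    rw [← Finset.sum_filter_add_sum_filter_not Finset.univ (fun i : Fin n => (i : ℕ) < m)
      (fun i => lam i)]
    have : ∀ i ∈ Finset.univ.filter (fun i : Fin n => (i : ℕ) < m),
        lam i - hh σ2 η (lam i) = gg σ2 η (lam i) := by
      intro i _
      unfold hh
      ring
    rw [add_sub_right_comm, ← Finset.sum_sub_distrib, Finset.sum_congr rfl this]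
  calc ∑ i ∈ Finset.univ.filter (fun i : Fin n => (i : ℕ) < m), gg σ2 η (lam i)
      + ∑ i ∈ Finset.univ.filter (fun i : Fin n => ¬ (i : ℕ) < m), lam i
      - σ2 / η ^ 2 * L
      = ∑ i, lam i
        - ∑ i ∈ Finset.univ.filter (fun i : Fin n => (i : ℕ) < m), hh σ2 η (lam i)
        - σ2 / η ^ 2 * L := by rw [hsplit]
  _ ≤ ∑ i, lam i - ∑ i, u i * hh σ2 η (lam i) - σ2 / η ^ 2 * L := by linarith
  _ = ∑ i, u i * gg σ2 η (lam i) + ∑ i, (1 - u i) * lam i - σ2 / η ^ 2 * L := by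
      rw [hassemble]
  _ ≤ ∑ j ∈ J, (∑ i, T j i * gg σ2 η (lam i) - σ2 / η ^ 2 * γ j) + ∑ j ∈ Jᶜ, lamt j := by
      rw [Finset.sum_sub_distrib, hswap1, hswap2]
      have : σ2 / η ^ 2 * (∑ j ∈ J, γ j) ≤ σ2 / η ^ 2 * L := by
        apply mul_le_mul_of_nonneg_left hbudget2
        positivity
      rw [← Finset.mul_sum]
      linarith
  _ ≤ ∑ j, σ2 * lamt j / (σ2 + β j) := hmain

lemma posdef_smul_add {k m : ℕ} {σ2 : ℝ} (hσ2 : 0 < σ2) (M : Matrix (Fin k) (Fin m) ℝ) :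
    (σ2 • (1 : Matrix (Fin k) (Fin k) ℝ) + M * Mᵀ).PosDef := by
  have h1 : (σ2 • (1 : Matrix (Fin k) (Fin k) ℝ)).PosDef := by
    rw [smul_one_eq_diagonal]
    exact Matrix.PosDef.diagonal (fun _ => hσ2)
  have h2 : (M * Mᵀ).PosSemidef := by
    simpa [conjTranspose_eq_transpose_of_trivial] using Matrix.posSemidef_self_mul_conjTranspose M
  exact h1.add_posSemidef h2

lemma mmse_eq {l n : ℕ} {σ2 : ℝ} (hσ2 : 0 < σ2)
    (U : Matrix (Fin n) (Fin n) ℝ) (hU : Uᵀ * U = 1)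
    (lam : Fin n → ℝ) (hlam : ∀ i, 0 ≤ lam i)
    (A : Matrix (Fin l) (Fin n) ℝ) :
    (U * diagonal lam * Uᵀ
      - U * diagonal lam * Uᵀ * (A * Uᵀ)ᵀ
        * (σ2 • (1 : Matrix (Fin l) (Fin l) ℝ) + (A * Uᵀ) * (U * diagonal lam * Uᵀ) * (A * Uᵀ)ᵀ)⁻¹
        * (A * Uᵀ) * (U * diagonal lam * Uᵀ)).trace
      = σ2 * ((σ2 • (1 : Matrix (Fin n) (Fin n) ℝ)
          + (diagonal fun i => Real.sqrt (lam i)) * (Aᵀ * A)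
            * (diagonal fun i => Real.sqrt (lam i)))⁻¹ * diagonal lam).trace := by
  have hUU : U * Uᵀ = 1 := mul_eq_one_comm.mp hU
  set Λ : Matrix (Fin n) (Fin n) ℝ := diagonal lam with hΛ
  set S : Matrix (Fin n) (Fin n) ℝ := diagonal (fun i => Real.sqrt (lam i)) with hS
  have hSS : S * S = Λ := by
    have hfun : (fun i => Real.sqrt (lam i) * Real.sqrt (lam i)) = lam :=
      funext fun i => Real.mul_self_sqrt (hlam i)
    rw [hS, hΛ, diagonal_mul_diagonal, hfun]
  have hST : Sᵀ = S := diagonal_transpose _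
  set X : Matrix (Fin l) (Fin n) ℝ := A * S with hX
  set W : Matrix (Fin l) (Fin l) ℝ := σ2 • 1 + X * Xᵀ with hW
  set N : Matrix (Fin n) (Fin n) ℝ := σ2 • 1 + Xᵀ * X with hN
  have hWpd : W.PosDef := posdef_smul_add hσ2 X
  have hNpd : N.PosDef := by
    have := posdef_smul_add hσ2 Xᵀ
    rwa [transpose_transpose] at this
  have hWd : IsUnit W.det := (Matrix.isUnit_iff_isUnit_det W).mp hWpd.isUnit
  have hNd : IsUnit N.det := (Matrix.isUnit_iff_isUnit_det N).mp hNpd.isUnit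
  have hcol1 : ∀ {k : ℕ} (M : Matrix (Fin n) (Fin k) ℝ), Uᵀ * (U * M) = M := by
    intro k M
    rw [← Matrix.mul_assoc, hU, Matrix.one_mul]
  -- push-through
  have key : Xᵀ * W = N * Xᵀ := by
    rw [hW, hN, Matrix.mul_add, Matrix.add_mul, Matrix.mul_smul, Matrix.smul_mul,
      Matrix.mul_one, Matrix.one_mul, hX]
    simp only [Matrix.mul_assoc]
  have key2 : N⁻¹ * Xᵀ = Xᵀ * W⁻¹ := by
    have e1 : N⁻¹ * (Xᵀ * W) * W⁻¹ = N⁻¹ * Xᵀ := by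
      rw [← Matrix.mul_assoc N⁻¹ Xᵀ W, Matrix.mul_assoc (N⁻¹ * Xᵀ) W W⁻¹,
        Matrix.mul_nonsing_inv W hWd, Matrix.mul_one]
    have e2 : N⁻¹ * (N * Xᵀ) * W⁻¹ = Xᵀ * W⁻¹ := by
      rw [← Matrix.mul_assoc N⁻¹ N Xᵀ, Matrix.nonsing_inv_mul N hNd, Matrix.one_mul]
    rw [← e1, key, e2]
  have key3 : Xᵀ * W⁻¹ * X = 1 - σ2 • N⁻¹ := by
    rw [← key2, Matrix.mul_assoc]
    have hXX : Xᵀ * X = N - σ2 • 1 := by rw [hN, add_sub_cancel_left]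
    rw [hXX, mul_sub, Matrix.nonsing_inv_mul N hNd]
    congr 1
    rw [Matrix.mul_smul, mul_one]
  -- collapse the U's
  have hΦT : (A * Uᵀ)ᵀ = U * Aᵀ := by rw [transpose_mul, transpose_transpose]
  have hmid : (A * Uᵀ) * (U * Λ * Uᵀ) * (A * Uᵀ)ᵀ = X * Xᵀ := by
    rw [hΦT, hX, transpose_mul, hST, ← hSS]
    simp only [Matrix.mul_assoc]
    rw [hcol1, hcol1]
  have hM : U * Λ * Uᵀ * (A * Uᵀ)ᵀ * W⁻¹ * (A * Uᵀ) * (U * Λ * Uᵀ)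
      = U * (S * (Xᵀ * W⁻¹ * X) * S) * Uᵀ := by
    rw [hΦT, hX, transpose_mul, hST, ← hSS]
    simp only [Matrix.mul_assoc]
    rw [hcol1, hcol1]
  have htrU : ∀ M : Matrix (Fin n) (Fin n) ℝ, (U * M * Uᵀ).trace = M.trace := by
    intro M
    rw [trace_mul_comm, ← Matrix.mul_assoc, hU, Matrix.one_mul]
  rw [trace_sub, hmid, ← hW, hM, key3, htrU, htrU]
  have hexp : (S * (1 - σ2 • N⁻¹) * S : Matrix (Fin n) (Fin n) ℝ)
      = Λ - σ2 • (S * N⁻¹ * S) := by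
    rw [mul_sub, sub_mul, mul_one, hSS]
    congr 1
    rw [Matrix.mul_smul, Matrix.smul_mul]
  rw [hexp, trace_sub, trace_smul]
  have htrS : (S * N⁻¹ * S).trace = (N⁻¹ * Λ).trace := by
    calc (S * N⁻¹ * S).trace = (S * (S * N⁻¹)).trace := trace_mul_comm _ _
    _ = (Λ * N⁻¹).trace := by rw [← Matrix.mul_assoc, hSS]
    _ = (N⁻¹ * Λ).trace := trace_mul_comm _ _
  rw [htrS]
  have hBN : Xᵀ * X = S * (Aᵀ * A) * S := by
    rw [hX, transpose_mul, hST]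
    simp only [Matrix.mul_assoc]
  rw [← hBN]
  simp only [smul_eq_mul]
  ring

open Matrix

lemma diag_conj {n : ℕ} (V : Matrix (Fin n) (Fin n) ℝ) (w : Fin n → ℝ) (i : Fin n) :
    (V * diagonal w * Vᵀ) i i = ∑ j, w j * V i j ^ 2 := by
  rw [Matrix.mul_apply]
  simp only [Matrix.mul_diagonal, Matrix.transpose_apply]
  apply Finset.sum_congr rfl
  intro j _
  ring

/-- With Σ_x = U·diag(λ)·Uᵀ, λ₁ ≥ … ≥ λ_s > 0, λᵢ = 0 for i > s, σ² > 0,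
η > 0 satisfying the water-filling normalization ∑_{i=1}^{min(ℓ,s)} max(η − σ²/λᵢ, 0) = ℓ,
dᵢ = max(η − σ²/λᵢ, 0) for i ≤ min(ℓ,s), dᵢ = 0 otherwise, and
Φ* = [diag(√d₁,…,√d_ℓ) 0]·Uᵀ, the kernel Φ* minimizes the Gaussian MMSE among all ℓ×n
kernels Φ with tr(Φ·Φᵀ) ≤ ℓ. -/
theorem stmt_13 {n l s : ℕ} (hl : 1 ≤ l) (hln : l ≤ n) (hs : s ≤ n)
    (σ2 : ℝ) (hσ2 : 0 < σ2)
    (U : Matrix (Fin n) (Fin n) ℝ) (hU : Uᵀ * U = 1)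
    (lam : Fin n → ℝ)
    (hmono : ∀ i j : Fin n, i ≤ j → lam j ≤ lam i)
    (hpos : ∀ i : Fin n, (i : ℕ) < s → 0 < lam i)
    (hzero : ∀ i : Fin n, s ≤ (i : ℕ) → lam i = 0)
    (Sx : Matrix (Fin n) (Fin n) ℝ) (hSx : Sx = U * Matrix.diagonal lam * Uᵀ)
    (η : ℝ) (hη : 0 < η)
    (hsum : ∑ i ∈ Finset.univ.filter (fun i : Fin l => (i : ℕ) < min l s),
        max (η - σ2 / lam (Fin.castLE hln i)) 0 = (l : ℝ))
    (d : Fin l → ℝ)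
    (hd : ∀ i : Fin l, d i =
        if (i : ℕ) < min l s then max (η - σ2 / lam (Fin.castLE hln i)) 0 else 0)
    (Φstar : Matrix (Fin l) (Fin n) ℝ)
    (hΦstar : Φstar = (Matrix.of fun (i : Fin l) (j : Fin n) =>
        if (j : ℕ) = (i : ℕ) then Real.sqrt (d i) else 0) * Uᵀ) :
    ∀ Φ : Matrix (Fin l) (Fin n) ℝ, (Φ * Φᵀ).trace ≤ (l : ℝ) →
      (Sx - Sx * Φstarᵀ
          * (σ2 • (1 : Matrix (Fin l) (Fin l) ℝ) + Φstar * Sx * Φstarᵀ)⁻¹ * Φstar * Sx).trace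
        ≤ (Sx - Sx * Φᵀ
          * (σ2 • (1 : Matrix (Fin l) (Fin l) ℝ) + Φ * Sx * Φᵀ)⁻¹ * Φ * Sx).trace := by
  intro Φ hΦ
  classical
  have hUU : U * Uᵀ = 1 := mul_eq_one_comm.mp hU
  have hlam0 : ∀ i : Fin n, 0 ≤ lam i := by
    intro i
    by_cases h : (i : ℕ) < s
    · exact (hpos i h).le
    · rw [hzero i (le_of_not_gt h)]
  set m := min l s with hm
  have hml : m ≤ l := min_le_left l s
  have hms : m ≤ s := min_le_right l s
  have hd0 : ∀ i : Fin l, 0 ≤ d i := by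
    intro i
    rw [hd]
    split_ifs
    · exact le_max_right _ _
    · exact le_rfl
  set dtil : Fin n → ℝ := fun i => if h : (i : ℕ) < l then d ⟨(i : ℕ), h⟩ else 0 with hdtil
  have hdtil0 : ∀ i, 0 ≤ dtil i := by
    intro i
    rw [hdtil]
    dsimp only
    split_ifs with h
    · exact hd0 _
    · exact le_rfl
  set S : Matrix (Fin n) (Fin n) ℝ := diagonal (fun i => Real.sqrt (lam i)) with hSdef
  set E : Matrix (Fin l) (Fin n) ℝ := Matrix.of fun (i : Fin l) (j : Fin n) =>
      if (j : ℕ) = (i : ℕ) then Real.sqrt (d i) else 0 with hE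
  -- ================== Φ* side ==================
  have hEE : Eᵀ * E = diagonal dtil := by
    ext i i'
    rw [Matrix.mul_apply]
    simp only [hE, Matrix.transpose_apply, Matrix.of_apply]
    by_cases hii : i' = i
    · rw [hii, Matrix.diagonal_apply_eq]
      by_cases hil : (i : ℕ) < l
      · rw [hdtil]
        dsimp only
        rw [dif_pos hil]
        rw [Finset.sum_eq_single (⟨(i : ℕ), hil⟩ : Fin l)]
        · rw [if_pos rfl]
          exact Real.mul_self_sqrt (hd0 _)
        · intro k _ hk
          rw [if_neg, zero_mul]
          intro hik
          exact hk (Fin.ext hik.symm)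
        · intro h
          exact absurd (Finset.mem_univ _) h
      · rw [hdtil]
        dsimp only
        rw [dif_neg hil]
        apply Finset.sum_eq_zero
        intro k _
        rw [if_neg, zero_mul]
        intro hik
        exact hil (hik ▸ k.isLt)
    · rw [Matrix.diagonal_apply_ne _ (fun hcon => hii hcon.symm)]
      apply Finset.sum_eq_zero
      intro k _
      by_cases h1 : (i : ℕ) = (k : ℕ)
      · have h2 : ¬ ((i' : ℕ) = (k : ℕ)) := fun hc => hii (Fin.ext (hc.trans h1.symm))
        rw [if_neg h2, mul_zero]
      · rw [if_neg h1, zero_mul]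
  have hBstar : S * (Eᵀ * E) * S = diagonal (fun i => lam i * dtil i) := by
    have hfun : (fun i => Real.sqrt (lam i) * dtil i * Real.sqrt (lam i))
        = fun i => lam i * dtil i := by
      funext i
      rw [mul_right_comm, Real.mul_self_sqrt (hlam0 i)]
    rw [hEE, hSdef, diagonal_mul_diagonal, diagonal_mul_diagonal, hfun]
  have hdenpos : ∀ i : Fin n, 0 < σ2 + lam i * dtil i := by
    intro i
    have := mul_nonneg (hlam0 i) (hdtil0 i)
    linarith
  have hNstar : σ2 • (1 : Matrix (Fin n) (Fin n) ℝ) + S * (Eᵀ * E) * S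
      = diagonal (fun i => σ2 + lam i * dtil i) := by
    rw [hBstar, smul_one_eq_diagonal, diagonal_add]
  have hNstarinv : (σ2 • (1 : Matrix (Fin n) (Fin n) ℝ) + S * (Eᵀ * E) * S)⁻¹
      = diagonal (fun i => (σ2 + lam i * dtil i)⁻¹) := by
    rw [hNstar]
    apply Matrix.inv_eq_right_inv
    rw [diagonal_mul_diagonal]
    have : (fun i => (σ2 + lam i * dtil i) * (σ2 + lam i * dtil i)⁻¹) = fun _ => (1 : ℝ) := by
      funext i
      exact mul_inv_cancel₀ (hdenpos i).ne'
    rw [this, diagonal_one]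
  have hstar_trace : (Sx - Sx * Φstarᵀ
        * (σ2 • (1 : Matrix (Fin l) (Fin l) ℝ) + Φstar * Sx * Φstarᵀ)⁻¹ * Φstar * Sx).trace
      = σ2 * ∑ i, (σ2 + lam i * dtil i)⁻¹ * lam i := by
    rw [hSx, hΦstar]
    rw [mmse_eq hσ2 U hU lam hlam0 E]
    rw [← hSdef, hNstarinv, diagonal_mul_diagonal, trace_diagonal]
  -- ================== general Φ side ==================
  set A : Matrix (Fin l) (Fin n) ℝ := Φ * U with hA
  have hAU : A * Uᵀ = Φ := by rw [hA, Matrix.mul_assoc, hUU, Matrix.mul_one]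
  set B : Matrix (Fin n) (Fin n) ℝ := S * (Aᵀ * A) * S with hB
  have hST : Sᵀ = S := by rw [hSdef]; exact diagonal_transpose _
  have hBX : B = (A * S)ᵀ * (A * S) := by
    conv_rhs => rw [transpose_mul, hST]
    rw [hB]
    simp only [Matrix.mul_assoc]
  have hBherm : B.IsHermitian := by
    rw [hBX, ← conjTranspose_eq_transpose_of_trivial]
    exact isHermitian_conjTranspose_mul_self _
  have hBpsd : B.PosSemidef := by
    rw [hBX, ← conjTranspose_eq_transpose_of_trivial]
    exact posSemidef_conjTranspose_mul_self _
  set V : Matrix (Fin n) (Fin n) ℝ := (hBherm.eigenvectorUnitary : Matrix (Fin n) (Fin n) ℝ)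
    with hV
  set β : Fin n → ℝ := hBherm.eigenvalues with hβdef
  have hβ0 : ∀ j, 0 ≤ β j := fun j => hBpsd.eigenvalues_nonneg j
  have hspec : B = V * diagonal β * Vᵀ := by
    have h := hBherm.spectral_theorem
    simp only [RCLike.ofReal_real_eq_id, Function.comp_def, id_eq] at h
    rw [hV, hβdef, ← conjTranspose_eq_transpose_of_trivial, ← star_eq_conjTranspose]
    exact h
  have hVtV : Vᵀ * V = 1 := by
    rw [hV, ← conjTranspose_eq_transpose_of_trivial, ← star_eq_conjTranspose]
    exact Unitary.coe_star_mul_self hBherm.eigenvectorUnitary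
  have hVVt : V * Vᵀ = 1 := by
    rw [hV, ← conjTranspose_eq_transpose_of_trivial, ← star_eq_conjTranspose]
    exact Unitary.coe_mul_star_self hBherm.eigenvectorUnitary
  set T : Fin n → Fin n → ℝ := fun j i => V i j ^ 2 with hT
  have hT0 : ∀ j i, 0 ≤ T j i := fun j i => sq_nonneg _
  have hTrow : ∀ j, ∑ i, T j i = 1 := by
    intro j
    have h := congrFun (congrFun hVtV j) j
    rw [Matrix.mul_apply] at h
    rw [Matrix.one_apply_eq] at h
    rw [← h]
    apply Finset.sum_congr rfl
    intro i _
    rw [hT]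
    simp [Matrix.transpose_apply]
    ring
  have hTcol : ∀ i, ∑ j, T j i = 1 := by
    intro i
    have h := congrFun (congrFun hVVt i) i
    rw [Matrix.mul_apply] at h
    rw [Matrix.one_apply_eq] at h
    rw [← h]
    apply Finset.sum_congr rfl
    intro j _
    rw [hT]
    simp [Matrix.transpose_apply]
    ring
  -- support of eigenvectors
  have hBrow0 : ∀ (i : Fin n), s ≤ (i : ℕ) → ∀ k, B i k = 0 := by
    intro i hi k
    rw [hB]
    have h1 : (S * (Aᵀ * A) * S) i k = Real.sqrt (lam i) * ((Aᵀ * A) * S) i k := by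
      rw [Matrix.mul_assoc, hSdef, Matrix.diagonal_mul]
    rw [h1, hzero i hi, Real.sqrt_zero, zero_mul]
  have hsupp : ∀ j, β j ≠ 0 → ∀ i : Fin n, s ≤ (i : ℕ) → T j i = 0 := by
    intro j hj i hi
    have hBV : B * V = V * diagonal β := by
      rw [hspec, Matrix.mul_assoc, Matrix.mul_assoc, hVtV, Matrix.mul_one]
    have h1 := congrFun (congrFun hBV i) j
    rw [Matrix.mul_apply, Matrix.mul_diagonal] at h1
    have h2 : ∑ k, B i k * V k j = 0 := by
      apply Finset.sum_eq_zero
      intro k _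
      rw [hBrow0 i hi k, zero_mul]
    rw [h2] at h1
    have h3 : V i j = 0 := by
      rcases mul_eq_zero.mp h1.symm with h | h
      · exact h
      · exact absurd h hj
    rw [hT]
    simp [h3]
  -- rank bound
  have hcard : (Finset.univ.filter (fun j : Fin n => β j ≠ 0)).card ≤ m := by
    have hrank : B.rank = (Finset.univ.filter (fun j : Fin n => β j ≠ 0)).card := by
      rw [hBherm.rank_eq_card_non_zero_eigs]
      rw [Fintype.card_subtype]
    have hr1 : B.rank ≤ l := by
      rw [hBX, rank_transpose_mul_self]
      exact (Matrix.rank_le_card_height _).trans (by simp)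
    have hr2 : B.rank ≤ s := by
      have h1 : B.rank ≤ S.rank := by
        rw [hB, Matrix.mul_assoc]
        exact Matrix.rank_mul_le_left S ((Aᵀ * A) * S)
      have h2 : S.rank = (Finset.univ.filter
          (fun i : Fin n => Real.sqrt (lam i) ≠ 0)).card := by
        rw [hSdef, Matrix.rank_diagonal, Fintype.card_subtype]
      have h3 : (Finset.univ.filter (fun i : Fin n => Real.sqrt (lam i) ≠ 0)).card
          ≤ (Finset.univ.filter (fun i : Fin n => (i : ℕ) < s)).card := by
        apply Finset.card_le_card
        intro i hi
        rw [Finset.mem_filter] at hi ⊢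
        refine ⟨Finset.mem_univ _, ?_⟩
        by_contra hcon
        apply hi.2
        rw [hzero i (le_of_not_gt hcon), Real.sqrt_zero]
      rw [card_filter_lt_fin hs] at h3
      omega
    omega
  -- budget
  have hdiagB : ∀ i, B i i = lam i * (Aᵀ * A) i i := by
    intro i
    rw [hB]
    have h1 : (S * (Aᵀ * A) * S) i i = (S * (Aᵀ * A)) i i * Real.sqrt (lam i) := by
      rw [hSdef, Matrix.mul_diagonal]
    have h2 : (S * (Aᵀ * A)) i i = Real.sqrt (lam i) * (Aᵀ * A) i i := by
      rw [hSdef, Matrix.diagonal_mul]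
    rw [h1, h2, mul_right_comm, Real.mul_self_sqrt (hlam0 i)]
  have hdiagB2 : ∀ i, B i i = ∑ j, β j * V i j ^ 2 := by
    intro i
    rw [hspec]
    exact diag_conj V β i
  have htrA : ∑ i, (Aᵀ * A) i i = (Φ * Φᵀ).trace := by
    have h2 : A * Aᵀ = Φ * Φᵀ := by
      rw [hA, transpose_mul, Matrix.mul_assoc, ← Matrix.mul_assoc U Uᵀ Φᵀ, hUU,
        Matrix.one_mul]
    calc ∑ i, (Aᵀ * A) i i = (Aᵀ * A).trace := by
          simp [Matrix.trace, Matrix.diag]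
    _ = (A * Aᵀ).trace := trace_mul_comm _ _
    _ = (Φ * Φᵀ).trace := by rw [h2]
  have hAA_nonneg : ∀ i, 0 ≤ (Aᵀ * A) i i := by
    intro i
    rw [Matrix.mul_apply]
    apply Finset.sum_nonneg
    intro k _
    rw [Matrix.transpose_apply]
    exact mul_self_nonneg _
  have hbudget : ∑ j, β j * (∑ i ∈ Finset.univ.filter (fun i : Fin n => (i : ℕ) < s),
      T j i / lam i) ≤ (l : ℝ) := by
    have hswap : ∑ j, β j * (∑ i ∈ Finset.univ.filter (fun i : Fin n => (i : ℕ) < s),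
        T j i / lam i)
        = ∑ i ∈ Finset.univ.filter (fun i : Fin n => (i : ℕ) < s),
            (∑ j, β j * V i j ^ 2) / lam i := by
      calc ∑ j, β j * (∑ i ∈ Finset.univ.filter (fun i : Fin n => (i : ℕ) < s), T j i / lam i)
          = ∑ j, ∑ i ∈ Finset.univ.filter (fun i : Fin n => (i : ℕ) < s),
              β j * (T j i / lam i) := by
            apply Finset.sum_congr rfl
            intro j _
            rw [Finset.mul_sum]
      _ = ∑ i ∈ Finset.univ.filter (fun i : Fin n => (i : ℕ) < s),
            ∑ j, β j * (T j i / lam i) := Finset.sum_comm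
      _ = ∑ i ∈ Finset.univ.filter (fun i : Fin n => (i : ℕ) < s),
            (∑ j, β j * V i j ^ 2) / lam i := by
            apply Finset.sum_congr rfl
            intro i _
            rw [Finset.sum_div]
            apply Finset.sum_congr rfl
            intro j _
            rw [hT]
            ring
    rw [hswap]
    have hentry : ∀ i ∈ Finset.univ.filter (fun i : Fin n => (i : ℕ) < s),
        (∑ j, β j * V i j ^ 2) / lam i = (Aᵀ * A) i i := by
      intro i hi
      rw [Finset.mem_filter] at hi
      rw [← hdiagB2, hdiagB, mul_comm, mul_div_assoc, div_self (hpos i hi.2).ne', mul_one]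
    rw [Finset.sum_congr rfl hentry]
    calc ∑ i ∈ Finset.univ.filter (fun i : Fin n => (i : ℕ) < s), (Aᵀ * A) i i
        ≤ ∑ i, (Aᵀ * A) i i :=
          Finset.sum_le_sum_of_subset_of_nonneg (Finset.subset_univ _)
            (fun i _ _ => hAA_nonneg i)
    _ = (Φ * Φᵀ).trace := htrA
    _ ≤ (l : ℝ) := hΦ
  -- inverse of N on the Φ side
  have hNspec : σ2 • (1 : Matrix (Fin n) (Fin n) ℝ) + B
      = V * diagonal (fun j => σ2 + β j) * Vᵀ := by
    have h1 : V * (σ2 • 1) * Vᵀ = σ2 • (1 : Matrix (Fin n) (Fin n) ℝ) := by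
      rw [Matrix.mul_smul, Matrix.mul_one, Matrix.smul_mul, hVVt]
    have hdd : diagonal (fun j : Fin n => σ2 + β j)
        = σ2 • (1 : Matrix (Fin n) (Fin n) ℝ) + diagonal β := by
      rw [smul_one_eq_diagonal, diagonal_add]
    rw [hspec, hdd, Matrix.mul_add, Matrix.add_mul, h1]
  have hNinv : (σ2 • (1 : Matrix (Fin n) (Fin n) ℝ) + B)⁻¹
      = V * diagonal (fun j => (σ2 + β j)⁻¹) * Vᵀ := by
    apply Matrix.inv_eq_right_inv
    rw [hNspec]
    have e1 : V * diagonal (fun j => σ2 + β j) * Vᵀ * (V * diagonal (fun j => (σ2 + β j)⁻¹) * Vᵀ)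
        = V * (diagonal (fun j => σ2 + β j) * (Vᵀ * V) * diagonal (fun j => (σ2 + β j)⁻¹)) * Vᵀ := by
      simp only [Matrix.mul_assoc]
    rw [e1, hVtV, Matrix.mul_one, diagonal_mul_diagonal]
    have e2 : (fun j => (σ2 + β j) * (σ2 + β j)⁻¹) = fun _ => (1 : ℝ) := by
      funext j
      have : 0 < σ2 + β j := by linarith [hβ0 j]
      exact mul_inv_cancel₀ this.ne'
    rw [e2, diagonal_one, Matrix.mul_one, hVVt]
  have hphi_trace : (Sx - Sx * Φᵀ
        * (σ2 • (1 : Matrix (Fin l) (Fin l) ℝ) + Φ * Sx * Φᵀ)⁻¹ * Φ * Sx).trace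
      = ∑ j, σ2 * (∑ i, T j i * lam i) / (σ2 + β j) := by
    rw [hSx, ← hAU]
    rw [mmse_eq hσ2 U hU lam hlam0 A]
    rw [← hSdef, ← hB, hNinv]
    have htr : (V * diagonal (fun j => (σ2 + β j)⁻¹) * Vᵀ * diagonal lam).trace
        = ∑ i, (∑ j, (σ2 + β j)⁻¹ * V i j ^ 2) * lam i := by
      simp only [Matrix.trace, Matrix.diag, Matrix.mul_diagonal]
      apply Finset.sum_congr rfl
      intro i _
      rw [diag_conj]
    rw [htr]
    calc σ2 * ∑ i, (∑ j, (σ2 + β j)⁻¹ * V i j ^ 2) * lam i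
        = ∑ i, ∑ j, σ2 * ((σ2 + β j)⁻¹ * V i j ^ 2 * lam i) := by
          rw [Finset.mul_sum]
          apply Finset.sum_congr rfl
          intro i _
          rw [Finset.sum_mul, Finset.mul_sum]
    _ = ∑ j, ∑ i, σ2 * ((σ2 + β j)⁻¹ * V i j ^ 2 * lam i) := Finset.sum_comm
    _ = ∑ j, σ2 * (∑ i, T j i * lam i) / (σ2 + β j) := by
          apply Finset.sum_congr rfl
          intro j _
          rw [div_eq_mul_inv, mul_right_comm, Finset.mul_sum]
          apply Finset.sum_congr rfl
          intro i _
          rw [hT]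
          ring
  -- translate hsum
  have hsum' : ∑ i ∈ Finset.univ.filter (fun i : Fin n => (i : ℕ) < m), dd σ2 η (lam i)
      = (l : ℝ) := by
    have haux : ∑ i ∈ Finset.univ.filter (fun i : Fin l => (i : ℕ) < m),
        max (η - σ2 / lam (Fin.castLE hln i)) 0
        = ∑ i ∈ Finset.univ.filter (fun i : Fin n => (i : ℕ) < m), dd σ2 η (lam i) := by
      apply Finset.sum_bij (fun (a : Fin l) _ => Fin.castLE hln a)
      · intro a ha
        rw [Finset.mem_filter] at ha ⊢
        exact ⟨Finset.mem_univ _, by simpa using ha.2⟩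
      · intro a _ b _ hab
        exact Fin.ext (by simpa [Fin.ext_iff] using hab)
      · intro b hb
        rw [Finset.mem_filter] at hb
        refine ⟨⟨(b : ℕ), lt_of_lt_of_le hb.2 hml⟩, ?_, ?_⟩
        · rw [Finset.mem_filter]
          exact ⟨Finset.mem_univ _, by simpa using hb.2⟩
        · exact Fin.ext (by simp)
      · intro a ha
        rw [Finset.mem_filter] at ha
        have hpos' : 0 < lam (Fin.castLE hln a) := by
          apply hpos
          simpa using lt_of_lt_of_le ha.2 hms
        rw [dd_eq_max hσ2 hη hpos']
    rw [← haux]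
    exact hsum
  -- identify the Φ* value with the core lower bound
  have hstar_eq : σ2 * ∑ i, (σ2 + lam i * dtil i)⁻¹ * lam i
      = ∑ i ∈ Finset.univ.filter (fun i : Fin n => (i : ℕ) < m), gg σ2 η (lam i)
        + ∑ i ∈ Finset.univ.filter (fun i : Fin n => ¬ (i : ℕ) < m), lam i
        - σ2 / η ^ 2 * (l : ℝ) := by
    rw [Finset.mul_sum]
    rw [← Finset.sum_filter_add_sum_filter_not Finset.univ (fun i : Fin n => (i : ℕ) < m)
      (fun i => σ2 * ((σ2 + lam i * dtil i)⁻¹ * lam i))]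
    have hterm1 : ∀ i ∈ Finset.univ.filter (fun i : Fin n => (i : ℕ) < m),
        σ2 * ((σ2 + lam i * dtil i)⁻¹ * lam i)
          = gg σ2 η (lam i) - σ2 / η ^ 2 * dd σ2 η (lam i) := by
      intro i hi
      have hi' := (Finset.mem_filter.mp hi).2
      have hil : (i : ℕ) < l := lt_of_lt_of_le hi' hml
      have hlpos : 0 < lam i := hpos i (lt_of_lt_of_le hi' hms)
      have hdtil_eq : dtil i = dd σ2 η (lam i) := by
        rw [hdtil]
        dsimp only
        rw [dif_pos hil]
        rw [hd]
        rw [if_pos (by simpa using hi')]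
        have hcast : lam (Fin.castLE hln ⟨(i : ℕ), hil⟩) = lam i := by
          have he : Fin.castLE hln ⟨(i : ℕ), hil⟩ = i := Fin.ext (by simp)
          rw [he]
        rw [hcast, ← dd_eq_max hσ2 hη hlpos]
      rw [hdtil_eq, gg_eq hσ2 hη]
      have hden : 0 < σ2 + lam i * dd σ2 η (lam i) := by
        have := mul_nonneg hlpos.le (dd_nonneg (σ2 := σ2) (η := η) (x := lam i) hσ2 hη)
        linarith
      field_simp
      ring
    have hterm2 : ∀ i ∈ Finset.univ.filter (fun i : Fin n => ¬ (i : ℕ) < m),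
        σ2 * ((σ2 + lam i * dtil i)⁻¹ * lam i) = lam i := by
      intro i hi
      have hi' := (Finset.mem_filter.mp hi).2
      have hdtil_eq : dtil i = 0 := by
        rw [hdtil]
        dsimp only
        split_ifs with h
        · rw [hd, if_neg (by simpa using hi')]
        · rfl
      rw [hdtil_eq, mul_zero, add_zero, ← mul_assoc, mul_inv_cancel₀ hσ2.ne', one_mul]
    rw [Finset.sum_congr rfl hterm1, Finset.sum_congr rfl hterm2]
    rw [Finset.sum_sub_distrib, ← Finset.mul_sum, hsum']
    ring
  -- apply the core lemma
  have hcore := core hσ2 hη m s hms (l : ℝ) lam hmono hpos hzero β hβ0 T hT0 hTrow hTcol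
    hsupp hcard hbudget
  rw [hstar_trace, hphi_trace, hstar_eq]
  exact hcore
end

section
/- Let A be a fixed real n×m matrix, and let Φ be a random ℓ×n matrix whose entries are independent standard Gaussian random variables, i.e., Φ is distributed according to the product measure on ℝ^{{1,…,ℓ}×{1,…,n}} in which each coordinate has the standard Gaussian distribution N(0,1) on ℝ. Then, for almost every Φ with respect to this measure, rank(Φ·A) = min(ℓ, rank(A)). -/
open MeasureTheory ProbabilityTheory

section Aux

open MvPolynomial Matrix

lemma measurable_mvpoly_eval {σ : Type*} (p : MvPolynomial σ ℝ) :
    Measurable fun x : σ → ℝ => eval x p := by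
  induction p using MvPolynomial.induction_on with
  | C a => simp only [eval_C]; exact measurable_const
  | add p q hp hq => simp only [map_add]; exact hp.add hq
  | mul_X p i hp => simp only [_root_.map_mul, eval_X]; exact hp.mul (measurable_pi_apply i)

lemma gaussian_poly_null_fin : ∀ (k : ℕ) (p : MvPolynomial (Fin k) ℝ), p ≠ 0 →
    (Measure.pi fun _ : Fin k => gaussianReal 0 1) {x | eval x p = 0} = 0 := by
  intro k
  induction k with
  | zero =>
    intro p hp
    obtain ⟨a, rfl⟩ := C_surjective (Fin 0) p
    have ha : a ≠ 0 := fun h => hp (by simp [h])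
    have : {x : Fin 0 → ℝ | eval x (C a) = 0} = ∅ := by
      ext x; simp [ha]
    rw [this]; simp
  | succ k ih =>
    intro p hp
    set q := finSuccEquiv ℝ k p with hqdef
    have hq0 : q ≠ 0 := fun h => hp (by
      have := (finSuccEquiv ℝ k).injective (h.trans (map_zero (finSuccEquiv ℝ k)).symm)
      exact this)
    obtain ⟨d, hd⟩ : ∃ d, q.coeff d ≠ 0 := by
      by_contra h
      push_neg at h
      exact hq0 (Polynomial.ext fun d => by simp [h d])
    set ν := Measure.pi fun _ : Fin k => gaussianReal 0 1
    set μ0 : Measure ℝ := gaussianReal 0 1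
    set S' : Set (ℝ × (Fin k → ℝ)) :=
      {yx | Polynomial.eval yx.1 (Polynomial.map (eval yx.2) q) = 0} with hS'def
    have hcons : Measurable fun yx : ℝ × (Fin k → ℝ) => (Fin.cons yx.1 yx.2 : Fin (k+1) → ℝ) := by
      refine measurable_pi_iff.2 fun i => ?_
      refine Fin.cases ?_ (fun j => ?_) i
      · simpa using measurable_fst
      · simp only [Fin.cons_succ]; exact (measurable_pi_apply j).comp measurable_snd
    have hfun : (fun yx : ℝ × (Fin k → ℝ) => Polynomial.eval yx.1 (Polynomial.map (eval yx.2) q))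
        = fun yx => eval (Fin.cons yx.1 yx.2 : Fin (k+1) → ℝ) p := by
      funext yx
      rw [eval_eq_eval_mv_eval']
    have hS'm : MeasurableSet S' := by
      rw [hS'def]
      have hm : Measurable fun yx : ℝ × (Fin k → ℝ) =>
          Polynomial.eval yx.1 (Polynomial.map (eval yx.2) q) := by
        rw [hfun]; exact (measurable_mvpoly_eval p).comp hcons
      exact hm (measurableSet_singleton 0)
    have hmp := measurePreserving_piFinSuccAbove (fun _ : Fin (k+1) => gaussianReal 0 1) 0
    have hpre : (MeasurableEquiv.piFinSuccAbove (fun _ : Fin (k+1) => ℝ) 0) ⁻¹' S'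
        = {x : Fin (k+1) → ℝ | eval x p = 0} := by
      ext f
      have h1 : (MeasurableEquiv.piFinSuccAbove (fun _ : Fin (k+1) => ℝ) 0) f
          = (f 0, fun j => f ((0 : Fin (k+1)).succAbove j)) := rfl
      simp only [Set.mem_preimage, h1, hS'def, Set.mem_setOf_eq]
      rw [← eval_eq_eval_mv_eval']
      have h2 : (Fin.cons (f 0) (fun j => f ((0 : Fin (k+1)).succAbove j)) : Fin (k+1) → ℝ) = f := by
        funext i
        refine Fin.cases ?_ (fun j => ?_) i <;> simp [Fin.succAbove]
      rw [h2]
    have key : (Measure.pi fun _ : Fin (k+1) => gaussianReal 0 1) {x | eval x p = 0}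
        = (μ0.prod ν) S' := by
      rw [← hpre]
      exact hmp.measure_preimage hS'm.nullMeasurableSet
    rw [key]
    have hswap : (μ0.prod ν) S' = (ν.prod μ0) (Prod.swap ⁻¹' S') := by
      rw [← Measure.prod_swap]
      exact Measure.map_apply measurable_swap hS'm
    rw [hswap, Measure.measure_prod_null (measurable_swap hS'm)]
    have hae : ∀ᵐ x ∂ν, eval x (q.coeff d) ≠ 0 := by
      rw [ae_iff]
      simpa using ih (q.coeff d) hd
    filter_upwards [hae] with x hx
    have hpx : Polynomial.map (eval x) q ≠ 0 := fun h => hx (by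
      have := congrArg (fun r => Polynomial.coeff r d) h
      simpa [Polynomial.coeff_map] using this)
    have hfin : {y : ℝ | Polynomial.IsRoot (Polynomial.map (eval x) q) y}.Finite :=
      Polynomial.finite_setOf_isRoot hpx
    have hvol : volume {y : ℝ | Polynomial.eval y (Polynomial.map (eval x) q) = 0} = 0 :=
      hfin.measure_zero _
    have : (Prod.mk x ⁻¹' (Prod.swap ⁻¹' S')) =
        {y : ℝ | Polynomial.eval y (Polynomial.map (eval x) q) = 0} := rfl
    rw [this]
    exact gaussianReal_absolutelyContinuous 0 (by norm_num) hvol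

lemma gaussian_poly_null_prod {l n : ℕ} (p : MvPolynomial (Fin l × Fin n) ℝ) (hp : p ≠ 0) :
    (Measure.pi fun _ : Fin l × Fin n => gaussianReal 0 1) {x | eval x p = 0} = 0 := by
  set e : Fin (l * n) ≃ Fin l × Fin n := finProdFinEquiv.symm with he
  have hmp := measurePreserving_piCongrLeft (α := fun _ : Fin l × Fin n => ℝ)
    (μ := fun _ : Fin l × Fin n => gaussianReal 0 1) e
  have hSm : MeasurableSet {x : Fin l × Fin n → ℝ | eval x p = 0} :=
    measurable_mvpoly_eval p (measurableSet_singleton 0)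
  rw [← hmp.measure_preimage hSm.nullMeasurableSet]
  have hpre : (MeasurableEquiv.piCongrLeft (fun _ : Fin l × Fin n => ℝ) e) ⁻¹'
      {x : Fin l × Fin n → ℝ | eval x p = 0}
      = {g : Fin (l * n) → ℝ | eval g (rename e.symm p) = 0} := by
    ext g
    have h1 : ∀ i, (MeasurableEquiv.piCongrLeft (fun _ : Fin l × Fin n => ℝ) e) g i
        = g (e.symm i) := by
      intro i
      have h2 := MeasurableEquiv.piCongrLeft_apply_apply (β := fun _ : Fin l × Fin n => ℝ)
        e g (e.symm i)
      rwa [Equiv.apply_symm_apply] at h2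
    simp only [Set.mem_preimage, Set.mem_setOf_eq, eval_rename]
    constructor
    · intro h
      rw [show (g ∘ e.symm) = fun i => g (e.symm i) from rfl]
      rw [show (fun i => g (e.symm i)) = fun i =>
        (MeasurableEquiv.piCongrLeft (fun _ : Fin l × Fin n => ℝ) e) g i from funext fun i => (h1 i).symm]
      exact h
    · intro h
      have : (fun i => (MeasurableEquiv.piCongrLeft (fun _ : Fin l × Fin n => ℝ) e) g i)
          = g ∘ e.symm := funext fun i => h1 i
      rw [show (MeasurableEquiv.piCongrLeft (fun _ : Fin l × Fin n => ℝ) e) g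
        = g ∘ e.symm from this]
      exact h
  rw [hpre]
  apply gaussian_poly_null_fin
  intro h
  apply hp
  have := rename_injective (R := ℝ) e.symm e.symm.injective
  apply this
  rw [h, map_zero]

lemma rank_submatrix_le' {a b a' b' : ℕ} (M : Matrix (Fin a) (Fin b) ℝ)
    (ρ : Fin a' → Fin a) (γ : Fin b' → Fin b) : (M.submatrix ρ γ).rank ≤ M.rank := by
  have h : M.submatrix ρ γ =
      ((1 : Matrix (Fin a) (Fin a) ℝ).submatrix ρ (Equiv.refl (Fin a))) * M *
      ((1 : Matrix (Fin b) (Fin b) ℝ).submatrix (Equiv.refl (Fin b)) γ) := by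
    rw [one_submatrix_mul ρ (Equiv.refl (Fin a)) M, mul_submatrix_one (Equiv.refl (Fin b)) γ]
    simp
  rw [h]
  exact le_trans (rank_mul_le_left _ _) (rank_mul_le_right _ _)

lemma full_rank_isUnit_det {k : ℕ} (M : Matrix (Fin k) (Fin k) ℝ) (h : M.rank = k) :
    IsUnit M.det := by
  rw [← Matrix.isUnit_iff_isUnit_det, ← Matrix.mulVec_surjective_iff_isUnit]
  have htop : LinearMap.range M.mulVecLin = ⊤ := by
    apply Submodule.eq_top_of_finrank_eq
    rw [← Matrix.rank, h]
    simp [Module.finrank_pi]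
  intro v
  have : v ∈ LinearMap.range M.mulVecLin := htop ▸ Submodule.mem_top
  obtain ⟨w, hw⟩ := this
  exact ⟨w, hw⟩

end Aux

section Main

open MvPolynomial Matrix

/-- If Φ is an ℓ×n random matrix with i.i.d. standard Gaussian entries
(law: the product over the entries of the standard Gaussian measure N(0,1) on ℝ), then for
almost every Φ, rank(Φ·A) = min(ℓ, rank A) for a fixed n×m matrix A. -/
theorem stmt_19 {n m l : ℕ} (A : Matrix (Fin n) (Fin m) ℝ) :
    ∀ᵐ f ∂(Measure.pi fun _ : Fin l × Fin n => gaussianReal 0 1),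
      ((Matrix.of fun i j => f (i, j)) * A).rank = min l A.rank := by
  classical
  set k := min l A.rank with hkdef
  have hkl : k ≤ l := min_le_left _ _
  have hkr : k ≤ A.rank := min_le_right _ _
  -- find k linearly independent columns of A
  obtain ⟨γ, hγinj, hγli⟩ : ∃ γ : Fin k → Fin m, Function.Injective γ ∧
      LinearIndependent ℝ fun i => Aᵀ (γ i) := by
    obtain ⟨s, hsub, hspan, hli⟩ := exists_linearIndependent ℝ (Set.range Aᵀ)
    have hsfin : s.Finite := (Set.finite_range Aᵀ).subset hsub
    haveI : Fintype s := hsfin.fintype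
    have hcard : k ≤ Fintype.card s := by
      have h1 : A.rank = Module.finrank ℝ (Submodule.span ℝ s) := by
        rw [Matrix.rank_eq_finrank_span_cols, hspan]; rfl
      have h2 : Module.finrank ℝ (Submodule.span ℝ s) = s.toFinset.card :=
        finrank_span_set_eq_card hli
      rw [Set.toFinset_card] at h2
      omega
    obtain ⟨emb⟩ : Nonempty (Fin k ↪ s) :=
      Function.Embedding.nonempty_of_card_le (by simpa using hcard)
    have hchoice : ∀ x : s, ∃ j : Fin m, Aᵀ j = (x : Fin n → ℝ) := fun x => hsub x.2
    choose ch hch using hchoice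
    refine ⟨fun i => ch (emb i), ?_, ?_⟩
    · intro i i' h
      apply emb.injective
      apply Subtype.ext
      rw [← hch (emb i), ← hch (emb i')]
      exact congrArg _ h
    · have : (fun i => Aᵀ (ch (emb i))) = (fun x : s => (x : Fin n → ℝ)) ∘ emb := by
        funext i; simp [hch]
      rw [this]
      exact hli.comp emb emb.injective
  set B : Matrix (Fin n) (Fin k) ℝ := A.submatrix id γ with hBdef
  have hBT : Bᵀ = fun i => Aᵀ (γ i) := by
    funext i t; rfl
  have hBrank : B.rank = k := by
    rw [Matrix.rank_eq_finrank_span_cols, show B.col = Bᵀ from rfl, hBT]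
    rw [finrank_span_eq_card hγli]
    simp
  have hG : (Bᵀ * B).rank = k := by rw [Matrix.rank_transpose_mul_self]; exact hBrank
  have hGdet : (Bᵀ * B).det ≠ 0 := by
    have := full_rank_isUnit_det _ hG
    exact this.ne_zero
  set ρ : Fin k → Fin l := Fin.castLE hkl with hρdef
  -- the polynomial
  set P : MvPolynomial (Fin l × Fin n) ℝ :=
    (Matrix.of fun i j : Fin k =>
      ∑ t : Fin n, X (ρ i, t) * C (A t (γ j)) : Matrix (Fin k) (Fin k) (MvPolynomial (Fin l × Fin n) ℝ)).det
    with hPdef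
  have heval : ∀ f : Fin l × Fin n → ℝ,
      eval f P = (((Matrix.of fun i j => f (i, j)) * A).submatrix ρ γ).det := by
    intro f
    rw [hPdef, RingHom.map_det]
    congr 1
    ext i j
    simp [Matrix.mul_apply]
  -- P is nonzero
  have hP : P ≠ 0 := by
    intro h
    set f₀ : Fin l × Fin n → ℝ := fun p =>
      if hp : (p.1 : ℕ) < k then B p.2 ⟨p.1, hp⟩ else 0 with hf₀
    have h1 : ((Matrix.of fun i j => f₀ (i, j)) * A).submatrix ρ γ = Bᵀ * B := by
      ext i j
      simp only [Matrix.submatrix_apply, Matrix.mul_apply, Matrix.of_apply, hf₀]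
      apply Finset.sum_congr rfl
      intro t _
      have hlt : ((ρ i : Fin l) : ℕ) < k := by
        simp [hρdef, Fin.castLE]
      rw [dif_pos hlt]
      have : (⟨(ρ i : ℕ), hlt⟩ : Fin k) = i := by
        apply Fin.ext
        simp [hρdef]
      rw [this]
      rfl
    have h2 := heval f₀
    rw [h, map_zero, h1] at h2
    exact hGdet h2.symm
  have hnull := gaussian_poly_null_prod P hP
  have hae : ∀ᵐ f ∂(Measure.pi fun _ : Fin l × Fin n => gaussianReal 0 1), eval f P ≠ 0 := by
    rw [ae_iff]
    simpa using hnull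
  filter_upwards [hae] with f hf
  set M := (Matrix.of fun i j => f (i, j)) * A with hMdef
  have hdet : (M.submatrix ρ γ).det ≠ 0 := by
    rw [heval f] at hf
    exact hf
  have h1 : (M.submatrix ρ γ).rank = k := by
    have := Matrix.rank_of_isUnit (M.submatrix ρ γ)
      (Matrix.isUnit_iff_isUnit_det _ |>.2 (isUnit_iff_ne_zero.2 hdet))
    simpa using this
  have h2 : k ≤ M.rank := h1 ▸ rank_submatrix_le' M ρ γ
  have h3 : M.rank ≤ l := by
    have := Matrix.rank_le_card_height M
    simpa using this
  have h4 : M.rank ≤ A.rank := Matrix.rank_mul_le_right _ _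
  omega

end Main
end
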